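/- arXiv:1006.2696 — 3 statements merged into one kernel-verified Lean document; each statement's English description precedes it below -/
import Mathlib

section
/- (Jovovic's conjecture.) Let m_n be the number of matrices in M_n^(1), i.e., upper triangular binary (0/1) matrices in which every row and every column contains a nonzero entry and whose entries sum to n (with m_0 = 1 for the empty matrix). Then in ℚ⟦x⟧, Σ_{n≥0} m_n x^n = Σ_{n≥0} ∏_{i=1}^{n} (1 − (1+x)^{−i}). -/
/-- Number of ascents in an integer sequence. -/
def ascList (l : List ℕ) : ℕ :=
  (List.range (l.length - 1)).countP (fun j => decide (l.getD j 0 < l.getD (j + 1) 0))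

/-- Ascent sequence predicate. -/
def IsAscentSeq (l : List ℕ) : Prop :=
  l.getD 0 0 = 0 ∧ ∀ i, 0 < i → i < l.length → l.getD i 0 ≤ 1 + ascList (l.take i)

/-- Number of equal adjacent pairs. -/
def adjpairs (l : List ℕ) : ℕ :=
  (List.range (l.length - 1)).countP (fun j => decide (l.getD j 0 = l.getD (j + 1) 0))

/-- All runs of equal consecutive letters have length at most `k`
(no `k+1` consecutive equal entries). -/
def RunsAtMost (k : ℕ) (l : List ℕ) : Prop :=
  ¬ ∃ i, i + k < l.length ∧ ∀ j ≤ k, l.getD (i + j) 0 = l.getD i 0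

/-- Order-isomorphism of two partial orders on `Fin n`. -/
def PosetIso {n : ℕ} (P Q : PartialOrder (Fin n)) : Prop :=
  ∃ e : Fin n ≃ Fin n, ∀ a b, P.le a b ↔ Q.le (e a) (e b)

/-- The setoid of partial orders on `Fin n` satisfying `Φ`, up to isomorphism. -/
def posetSetoid (n : ℕ) (Φ : PartialOrder (Fin n) → Prop) :
    Setoid {P : PartialOrder (Fin n) // Φ P} where
  r P Q := PosetIso P.1 Q.1
  iseqv := by
    constructor
    · intro P
      exact ⟨Equiv.refl _, fun a b => Iff.rfl⟩
    · rintro P Q ⟨e, he⟩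
      refine ⟨e.symm, fun a b => ?_⟩
      simp only [he (e.symm a) (e.symm b), Equiv.apply_symm_apply]
    · rintro P Q R ⟨e, he⟩ ⟨f, hf⟩
      exact ⟨e.trans f, fun a b => (he a b).trans (hf (e a) (e b))⟩

/-- The number of isomorphism classes of partial orders on `n` elements satisfying `Φ`. -/
noncomputable def posetCount (n : ℕ) (Φ : PartialOrder (Fin n) → Prop) : ℕ :=
  Nat.card (Quotient (posetSetoid n Φ))

/-- A poset is (2+2)-free. -/
def TwoTwoFree {n : ℕ} (P : PartialOrder (Fin n)) : Prop :=
  ¬ ∃ a b c d : Fin n, P.lt a b ∧ P.lt c d ∧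
    ¬ P.le a c ∧ ¬ P.le c a ∧ ¬ P.le a d ∧ ¬ P.le d a ∧
    ¬ P.le b c ∧ ¬ P.le c b ∧ ¬ P.le b d ∧ ¬ P.le d b

/-- Two elements are indistinguishable: same strict down-set and same strict up-set. -/
def Indist {n : ℕ} (P : PartialOrder (Fin n)) (x y : Fin n) : Prop :=
  (∀ z, P.lt z x ↔ P.lt z y) ∧ (∀ z, P.lt x z ↔ P.lt y z)

/-- Indistinguishability as a setoid. -/
def indistSetoid {n : ℕ} (P : PartialOrder (Fin n)) : Setoid (Fin n) where
  r := Indist P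
  iseqv := ⟨fun _ => ⟨fun _ => Iff.rfl, fun _ => Iff.rfl⟩,
    fun h => ⟨fun z => (h.1 z).symm, fun z => (h.2 z).symm⟩,
    fun h h' => ⟨fun z => (h.1 z).trans (h'.1 z), fun z => (h.2 z).trans (h'.2 z)⟩⟩

/-- Size of the indistinguishability class of `x`. -/
noncomputable def classSize {n : ℕ} (P : PartialOrder (Fin n)) (x : Fin n) : ℕ :=
  Nat.card {y : Fin n // Indist P x y}

/-- `maxindist(P) ≤ k`: each indistinguishability class has size at most `k`. -/
def MaxindistLe {n : ℕ} (P : PartialOrder (Fin n)) (k : ℕ) : Prop :=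
  ∀ x : Fin n, classSize P x ≤ k

/-- No two distinct elements are indistinguishable. -/
def PrimitivePoset {n : ℕ} (P : PartialOrder (Fin n)) : Prop :=
  ∀ x y : Fin n, Indist P x y → x = y

/-- `rep(P)`: the minimum number of elements whose removal leaves an induced
subposet with no pair of distinct indistinguishable elements. -/
noncomputable def repStat {n : ℕ} (P : PartialOrder (Fin n)) : ℕ :=
  sInf {m | ∃ S : Finset (Fin n), S.card = m ∧
    ∀ x ∉ S, ∀ y ∉ S, Indist P x y → x = y}

/-- The strict down-set of `x`. -/
def downSet {n : ℕ} (P : PartialOrder (Fin n)) (x : Fin n) : Set (Fin n) :=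
  {z | P.lt z x}

/-- The level of `x`: the number of strict down-sets strictly contained in `D(x)`. -/
noncomputable def levelOf {n : ℕ} (P : PartialOrder (Fin n)) (x : Fin n) : ℕ :=
  {S : Set (Fin n) | (∃ z, S = downSet P z) ∧ S ⊂ downSet P x}.ncard

/-- `levels(P)`: index of the highest level. -/
noncomputable def levelsStat {n : ℕ} (P : PartialOrder (Fin n)) : ℕ :=
  {S : Set (Fin n) | ∃ z, S = downSet P z}.ncard - 1

/-- `x` is a maximal element. -/
def IsMaximal {n : ℕ} (P : PartialOrder (Fin n)) (x : Fin n) : Prop :=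
  ∀ z, ¬ P.lt x z

/-- `minmax(P)`: the minimum level of a maximal element. -/
noncomputable def minmaxStat {n : ℕ} (P : PartialOrder (Fin n)) : ℕ :=
  sInf {j | ∃ x, IsMaximal P x ∧ levelOf P x = j}

/-- Membership in `M_n`: upper triangular, no zero row or column, entries sum to `n`. -/
def InMatM (n : ℕ) (A : Σ d : ℕ, Matrix (Fin d) (Fin d) ℕ) : Prop :=
  (∀ i j : Fin A.1, (j : ℕ) < (i : ℕ) → A.2 i j = 0) ∧
  (∀ i : Fin A.1, ∃ j, A.2 i j ≠ 0) ∧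
  (∀ j : Fin A.1, ∃ i, A.2 i j ≠ 0) ∧
  (∑ i, ∑ j, A.2 i j) = n

/-- All entries are at most `k`. -/
def EntriesLe (k : ℕ) (A : Σ d : ℕ, Matrix (Fin d) (Fin d) ℕ) : Prop :=
  ∀ i j, A.2 i j ≤ k

/-- `index(A) - 1`: the least (0-based) row index with a nonzero entry in the last column. -/
noncomputable def matIndex0 (A : Σ d : ℕ, Matrix (Fin d) (Fin d) ℕ) : ℕ :=
  sInf {i : ℕ | ∃ (h : i < A.1) (h' : A.1 - 1 < A.1), A.2 ⟨i, h⟩ ⟨A.1 - 1, h'⟩ ≠ 0}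

/-- The number of nonzero entries of `A`. -/
noncomputable def matNZ (A : Σ d : ℕ, Matrix (Fin d) (Fin d) ℕ) : ℕ :=
  Nat.card {p : Fin A.1 × Fin A.1 // A.2 p.1 p.2 ≠ 0}

/-- Membership in `R_n`. -/
def InRset {n : ℕ} (π : Equiv.Perm (Fin n)) : Prop :=
  ¬ ∃ i j k : Fin n, (j : ℕ) = (i : ℕ) + 1 ∧ (i : ℕ) + 1 < (k : ℕ) ∧
    (π k : ℕ) < (π i : ℕ) ∧ (π i : ℕ) < (π j : ℕ) ∧ (π i : ℕ) = (π k : ℕ) + 1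

/-- No `k+1` consecutive letters, each one less than the previous. -/
def NoDescRun {n : ℕ} (k : ℕ) (π : Equiv.Perm (Fin n)) : Prop :=
  ¬ ∃ (i : ℕ) (h : i + k < n), ∀ j, ∀ hj : j ≤ k,
    (π ⟨i + j, by omega⟩ : ℕ) = (π ⟨i, by omega⟩ : ℕ) - j

/-- The number of descents by one: indices `i` with `π_i = π_{i+1} + 1`. -/
noncomputable def adjdes {n : ℕ} (π : Equiv.Perm (Fin n)) : ℕ :=
  Nat.card {i : ℕ // ∃ h : i + 1 < n,
    (π ⟨i, Nat.lt_of_succ_lt h⟩ : ℕ) = (π ⟨i + 1, h⟩ : ℕ) + 1}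

/-- A perfect matching, encoded as a fixed-point-free involution. -/
def IsMatching {m : ℕ} (f : Equiv.Perm (Fin m)) : Prop :=
  (∀ x, f (f x) = x) ∧ ∀ x, f x ≠ x

/-- The Stoimenow condition on a matching. -/
def IsStoimenow {m : ℕ} (f : Equiv.Perm (Fin m)) : Prop :=
  ¬ ∃ a c : Fin m, a < f a ∧ c < f c ∧
    (((a : ℕ) = (c : ℕ) + 1 ∧ f a < f c) ∨ ((a : ℕ) < (c : ℕ) ∧ (f a : ℕ) = (f c : ℕ) + 1))

/-- There are `i, j` such that `{i+l, j+l}` is an arc for every `l = 0, …, k`. -/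
def HasSimRun {m : ℕ} (k : ℕ) (f : Equiv.Perm (Fin m)) : Prop :=
  ∃ i j : ℕ, ∀ l ≤ k, ∃ (h1 : i + l < m) (h2 : j + l < m), f ⟨i + l, h1⟩ = ⟨j + l, h2⟩

/-- After removing the arcs with endpoints in `A`, no pair of similar arcs remains. -/
def SimilarFree {m : ℕ} (f : Equiv.Perm (Fin m)) (A : Finset (Fin m)) : Prop :=
  ¬ ∃ (i j : ℕ) (h1 : i < m) (h2 : j < m) (h3 : i + 1 < m) (h4 : j + 1 < m),
    f ⟨i, h1⟩ = ⟨j, h2⟩ ∧ f ⟨i + 1, h3⟩ = ⟨j + 1, h4⟩ ∧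
    (⟨i, h1⟩ : Fin m) ∉ A ∧ (⟨i + 1, h3⟩ : Fin m) ∉ A ∧
    (⟨j, h2⟩ : Fin m) ∉ A ∧ (⟨j + 1, h4⟩ : Fin m) ∉ A

/-- `echords(M)`: minimum number of arcs whose removal leaves no similar pair. -/
noncomputable def echords {m : ℕ} (f : Equiv.Perm (Fin m)) : ℕ :=
  sInf {c | ∃ A : Finset (Fin m), (∀ x ∈ A, f x ∈ A) ∧ A.card = 2 * c ∧ SimilarFree f A}


namespace Jov

open PowerSeries Finset

noncomputable section

def yy : PowerSeries ℚ := 1 + PowerSeries.X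

def zz (i : ℕ) : PowerSeries ℚ := yy ^ i - 1

def tt (i : ℕ) : PowerSeries ℚ := 1 - (yy⁻¹) ^ i

lemma constCoeff_yy : PowerSeries.constantCoeff yy ≠ 0 := by
  simp [yy]

lemma yy_unit' : yy⁻¹ * yy = 1 :=
  PowerSeries.inv_mul_cancel _ constCoeff_yy

lemma tt_eq (i : ℕ) : tt i = yy⁻¹ ^ i * zz i := by
  have h : yy⁻¹ ^ i * yy ^ i = 1 := by rw [← mul_pow, yy_unit', one_pow]
  rw [tt, zz, mul_sub, h, mul_one]

lemma X_dvd_zz (i : ℕ) : (PowerSeries.X : PowerSeries ℚ) ∣ zz i := by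
  rw [PowerSeries.X_dvd_iff]
  simp [zz, yy]

lemma X_dvd_tt (i : ℕ) : (PowerSeries.X : PowerSeries ℚ) ∣ tt i := by
  rw [tt_eq]; exact (X_dvd_zz i).mul_left _

def FF : ℕ → ℕ → PowerSeries ℚ
  | 0, 0 => 1
  | 0, _ + 1 => 0
  | _ + 1, 0 => 0
  | k + 1, n + 1 => zz (n + 1) * (FF k n - FF k (n + 1))

lemma FF_zero_zero : FF 0 0 = 1 := rfl
lemma FF_zero_succ (n : ℕ) : FF 0 (n + 1) = 0 := rfl
lemma FF_succ_zero (k : ℕ) : FF (k + 1) 0 = 0 := rfl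
lemma FF_succ_succ (k n : ℕ) :
    FF (k + 1) (n + 1) = zz (n + 1) * (FF k n - FF k (n + 1)) := rfl

lemma X_pow_dvd_FF : ∀ k n, (PowerSeries.X : PowerSeries ℚ) ^ k ∣ FF k n := by
  intro k
  induction k with
  | zero => intro n; simpa using one_dvd _
  | succ k ih =>
    intro n
    match n with
    | 0 => rw [FF_succ_zero]; exact dvd_zero _
    | n + 1 =>
      rw [FF_succ_succ, pow_succ']
      exact mul_dvd_mul (X_dvd_zz _) (dvd_sub (ih n) (ih (n + 1)))

def Sd (d n : ℕ) : PowerSeries ℚ := ∑ k ∈ Finset.range (d + 1), FF k n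

lemma Sd_succ (d n : ℕ) :
    Sd d (n + 1) = tt (n + 1) * ((Sd d n - FF d n) + FF d (n + 1)) := by
  have h1 : Sd d (n + 1) = zz (n + 1) *
      ((∑ k ∈ Finset.range d, FF k n) - ∑ k ∈ Finset.range d, FF k (n + 1)) := by
    rw [Sd, Finset.sum_range_succ']
    simp only [FF_succ_succ, FF_zero_succ, add_zero]
    rw [← Finset.mul_sum, Finset.sum_sub_distrib]
  have ha : Sd d n = (∑ k ∈ Finset.range d, FF k n) + FF d n := Finset.sum_range_succ _ _
  have hb : Sd d (n + 1) = (∑ k ∈ Finset.range d, FF k (n + 1)) + FF d (n + 1) :=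
    Finset.sum_range_succ _ _
  have h4 : yy ^ (n + 1) * Sd d (n + 1)
      = zz (n + 1) * ((Sd d n - FF d n) + FF d (n + 1)) := by
    rw [zz] at h1 ⊢
    linear_combination h1 - (yy ^ (n + 1) - 1) * ha + (yy ^ (n + 1) - 1) * hb
  calc Sd d (n + 1) = (yy⁻¹ ^ (n + 1) * yy ^ (n + 1)) * Sd d (n + 1) := by
        rw [← mul_pow, yy_unit', one_pow, one_mul]
    _ = yy⁻¹ ^ (n + 1) * (yy ^ (n + 1) * Sd d (n + 1)) := by ring
    _ = yy⁻¹ ^ (n + 1) * (zz (n + 1) * ((Sd d n - FF d n) + FF d (n + 1))) := by rw [h4]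
    _ = tt (n + 1) * ((Sd d n - FF d n) + FF d (n + 1)) := by rw [tt_eq]; ring

lemma analytic (d : ℕ) :
    ∀ n, (PowerSeries.X : PowerSeries ℚ) ^ (d + 1) ∣ Sd d n - ∏ i ∈ Finset.Icc 1 n, tt i := by
  intro n
  induction n with
  | zero =>
    have h : Sd d 0 = 1 := by
      rw [Sd, Finset.sum_range_succ']
      simp only [FF_succ_zero, FF_zero_zero, Finset.sum_const_zero, zero_add]
    rw [h]
    simp
  | succ n ih =>
    rw [Sd_succ, Finset.prod_Icc_succ_top (Nat.le_add_left 1 n)]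
    have hexp : tt (n + 1) * ((Sd d n - FF d n) + FF d (n + 1))
        - (∏ i ∈ Finset.Icc 1 n, tt i) * tt (n + 1)
        = tt (n + 1) * (Sd d n - ∏ i ∈ Finset.Icc 1 n, tt i)
          + tt (n + 1) * (FF d (n + 1) - FF d n) := by ring
    rw [hexp]
    refine dvd_add (ih.mul_left _) ?_
    rw [pow_succ']
    exact mul_dvd_mul (X_dvd_tt _) (dvd_sub (X_pow_dvd_FF d _) (X_pow_dvd_FF d _))


/-! ### The signed subset sums `Vp` and their recursion -/

def cc (R : Finset ℕ) (j : ℕ) : ℕ := (Finset.range (j + 1) \ R).card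

def Vp (k n : ℕ) : PowerSeries ℚ :=
  ∑ R ∈ (Finset.range k).powerset.filter (fun R => R.card + n = k),
    (-1 : PowerSeries ℚ) ^ R.card * ∏ j ∈ Finset.range k, zz (cc R j)

lemma sum1_eq (k n : ℕ) :
    (∑ R ∈ (Finset.range k).powerset,
      if R.card + (n + 1) = k + 1 then
        (-1 : PowerSeries ℚ) ^ R.card *
          ((∏ j ∈ Finset.range k, zz (cc R j)) * zz (cc R k))
      else 0)
    = zz (n + 1) * Vp k n := by
  rw [Vp, Finset.sum_filter, Finset.mul_sum]
  refine Finset.sum_congr rfl fun R hR => ?_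
  have hsub : R ⊆ Finset.range k := Finset.mem_powerset.1 hR
  by_cases hc : R.card + n = k
  · rw [if_pos (by omega), if_pos hc]
    have hck : cc R k = n + 1 := by
      rw [cc, Finset.card_sdiff_of_subset (hsub.trans (Finset.range_subset_range.2 (Nat.le_succ k))),
        Finset.card_range]
      omega
    rw [hck]; ring
  · rw [if_neg (by omega), if_neg hc, mul_zero]

lemma sum2_eq (k n : ℕ) :
    (∑ R ∈ (Finset.range k).powerset,
      if (insert k R).card + (n + 1) = k + 1 then
        (-1 : PowerSeries ℚ) ^ (insert k R).card *
          ((∏ j ∈ Finset.range k, zz (cc (insert k R) j)) * zz (cc (insert k R) k))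
      else 0)
    = -(zz (n + 1) * Vp k (n + 1)) := by
  rw [Vp, Finset.sum_filter, Finset.mul_sum, ← Finset.sum_neg_distrib]
  refine Finset.sum_congr rfl fun R hR => ?_
  have hsub : R ⊆ Finset.range k := Finset.mem_powerset.1 hR
  have hk : k ∉ R := fun h => Finset.notMem_range_self (hsub h)
  have hci : (insert k R).card = R.card + 1 := Finset.card_insert_of_notMem hk
  by_cases hc : R.card + (n + 1) = k
  · rw [if_pos (by rw [hci]; omega), if_pos hc]
    have hprod : (∏ j ∈ Finset.range k, zz (cc (insert k R) j))
        = ∏ j ∈ Finset.range k, zz (cc R j) := by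
      refine Finset.prod_congr rfl fun j hj => ?_
      have hj' : j < k := Finset.mem_range.1 hj
      have hset : Finset.range (j + 1) \ insert k R = Finset.range (j + 1) \ R := by
        ext m
        simp only [Finset.mem_sdiff, Finset.mem_insert, Finset.mem_range]
        constructor
        · rintro ⟨h1, h2⟩; exact ⟨h1, fun h => h2 (Or.inr h)⟩
        · rintro ⟨h1, h2⟩
          refine ⟨h1, ?_⟩
          rintro (rfl | h)
          · omega
          · exact h2 h
      rw [cc, cc, hset]
    have hck : cc (insert k R) k = n + 1 := by
      rw [cc, Finset.card_sdiff_of_subset, hci, Finset.card_range]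
      · omega
      · exact Finset.insert_subset (Finset.mem_range.2 (Nat.lt_succ_self k))
          (hsub.trans (Finset.range_subset_range.2 (Nat.le_succ k)))
    rw [hci, hck, hprod, pow_succ]
    ring
  · rw [if_neg (by rw [hci]; omega), if_neg hc, mul_zero, neg_zero]

lemma Vp_eq_FF : ∀ k n, Vp k n = FF k n := by
  intro k
  induction k with
  | zero =>
    intro n
    cases n with
    | zero =>
      rw [Vp, FF_zero_zero]
      simp [Finset.filter_singleton]
    | succ n =>
      rw [Vp, FF_zero_succ]
      simp
  | succ k ih =>
    intro n
    cases n with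
    | zero =>
      rw [FF_succ_zero, Vp]
      refine Finset.sum_eq_zero fun R hR => ?_
      obtain ⟨hsub, hcard⟩ := Finset.mem_filter.1 hR
      have hsub' : R ⊆ Finset.range (k + 1) := Finset.mem_powerset.1 hsub
      obtain rfl : R = Finset.range (k + 1) :=
        Finset.eq_of_subset_of_card_le hsub' (by rw [Finset.card_range]; omega)
      have h0 : cc (Finset.range (k + 1)) 0 = 0 := by
        rw [cc, Finset.card_eq_zero, Finset.sdiff_eq_empty_iff_subset]
        exact Finset.range_subset_range.2 (by omega)
      refine mul_eq_zero_of_right _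
        (Finset.prod_eq_zero (Finset.mem_range.2 (Nat.succ_pos k)) ?_)
      rw [h0, zz, pow_zero, sub_self]
    | succ n =>
      rw [FF_succ_succ, ← ih n, ← ih (n + 1), Vp, Finset.sum_filter]
      simp only [Finset.prod_range_succ]
      rw [Finset.range_add_one, Finset.sum_powerset_insert Finset.notMem_range_self,
        sum1_eq, sum2_eq]
      ring

def V (k : ℕ) : PowerSeries ℚ :=
  ∑ R ∈ (Finset.range k).powerset,
    (-1 : PowerSeries ℚ) ^ R.card * ∏ j ∈ Finset.range k, zz (cc R j)

lemma V_eq_sum_Vp (d k : ℕ) (hk : k ≤ d) :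
    V k = ∑ n ∈ Finset.range (d + 1), Vp k n := by
  rw [eq_comm, V]
  have h1 : ∀ n, Vp k n = ∑ R ∈ (Finset.range k).powerset.filter (fun R => k - R.card = n),
      (-1 : PowerSeries ℚ) ^ R.card * ∏ j ∈ Finset.range k, zz (cc R j) := by
    intro n
    rw [Vp]
    congr 1
    refine Finset.filter_congr fun R hR => ?_
    have : R.card ≤ k := by
      have := Finset.card_le_card (Finset.mem_powerset.1 hR)
      rwa [Finset.card_range] at this
    constructor <;> intro h <;> omega
  rw [Finset.sum_congr rfl fun n _ => h1 n]
  refine Finset.sum_fiberwise_of_maps_to (fun R hR => Finset.mem_range.2 ?_) _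
  omega


/-! ### The sieve: covering column sequences -/

def wt {k : ℕ} (g : Fin k → Finset ℕ) : ℕ := ∑ j, (g j).card

def colF (k : ℕ) (R : Finset ℕ) : Finset (Fin k → Finset ℕ) :=
  Fintype.piFinset fun j => ((Finset.range ((j : ℕ) + 1)) \ R).powerset.erase ∅

def unc {k : ℕ} (g : Fin k → Finset ℕ) : Finset ℕ :=
  (Finset.range k).filter fun i => ∀ j, i ∉ g j

def W (k : ℕ) : PowerSeries ℚ :=
  ∑ g ∈ (colF k ∅).filter (fun g => unc g = ∅), (PowerSeries.X : PowerSeries ℚ) ^ wt g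

lemma sum_pow_card (T : Finset ℕ) :
    ∑ S ∈ T.powerset, (PowerSeries.X : PowerSeries ℚ) ^ S.card = yy ^ T.card := by
  have h := Finset.prod_add (fun _ : ℕ => (PowerSeries.X : PowerSeries ℚ))
    (fun _ : ℕ => (1 : PowerSeries ℚ)) T
  simp only [Finset.prod_const, one_pow, mul_one] at h
  rw [← h, yy]
  rw [add_comm]

lemma sum_pow_card_erase (T : Finset ℕ) :
    ∑ S ∈ T.powerset.erase ∅, (PowerSeries.X : PowerSeries ℚ) ^ S.card = yy ^ T.card - 1 := by
  have h := Finset.add_sum_erase T.powerset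
    (fun S => (PowerSeries.X : PowerSeries ℚ) ^ S.card) (Finset.empty_mem_powerset T)
  rw [sum_pow_card] at h
  simp only [Finset.card_empty, pow_zero] at h
  linear_combination h

lemma A_eq (k : ℕ) (R : Finset ℕ) :
    ∑ g ∈ colF k R, (PowerSeries.X : PowerSeries ℚ) ^ wt g
      = ∏ j ∈ Finset.range k, zz (cc R j) := by
  have h1 : ∀ g : Fin k → Finset ℕ,
      (PowerSeries.X : PowerSeries ℚ) ^ wt g = ∏ j, (PowerSeries.X : PowerSeries ℚ) ^ (g j).card :=
    fun g => (Finset.prod_pow_eq_pow_sum _ _ _).symm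
  have h2 := Finset.prod_univ_sum
    (fun j : Fin k => ((Finset.range ((j : ℕ) + 1) \ R).powerset.erase ∅))
    (fun (j : Fin k) (S : Finset ℕ) => (PowerSeries.X : PowerSeries ℚ) ^ S.card)
  rw [Finset.sum_congr rfl fun g _ => h1 g, colF, ← h2]
  rw [Finset.prod_congr rfl fun (j : Fin k) _ => sum_pow_card_erase _]
  exact Fin.prod_univ_eq_prod_range (fun j => zz (cc R j)) k

lemma colF_filter (k : ℕ) (R : Finset ℕ) (hR : R ⊆ Finset.range k) :
    colF k R = (colF k ∅).filter fun g => R ⊆ unc g := by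
  ext g
  simp only [colF, Fintype.mem_piFinset, Finset.mem_erase, Finset.mem_powerset,
    Finset.mem_filter, Finset.sdiff_empty]
  constructor
  · intro h
    refine ⟨fun j => ⟨(h j).1, (h j).2.trans Finset.sdiff_subset⟩, ?_⟩
    intro i hi
    rw [unc, Finset.mem_filter]
    exact ⟨hR hi, fun j hgj => (Finset.mem_sdiff.1 ((h j).2 hgj)).2 hi⟩
  · rintro ⟨h, hsub⟩
    intro j
    refine ⟨(h j).1, fun i hij => Finset.mem_sdiff.2 ⟨(h j).2 hij, fun hiR => ?_⟩⟩
    have hu := hsub hiR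
    rw [unc, Finset.mem_filter] at hu
    exact hu.2 j hij

lemma sum_neg_one_pow (s : Finset ℕ) :
    ∑ R ∈ s.powerset, (-1 : PowerSeries ℚ) ^ R.card = if s = ∅ then 1 else 0 := by
  induction s using Finset.induction_on with
  | empty => simp
  | @insert a s ha ih =>
    rw [Finset.sum_powerset_insert ha]
    have h2 : ∑ R ∈ s.powerset, (-1 : PowerSeries ℚ) ^ (insert a R).card
        = ∑ R ∈ s.powerset, -((-1 : PowerSeries ℚ) ^ R.card) := by
      refine Finset.sum_congr rfl fun R hR => ?_
      rw [Finset.card_insert_of_notMem (fun h => ha (Finset.mem_powerset.1 hR h)), pow_succ]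
      ring
    rw [h2, ← Finset.sum_add_distrib]
    simp [Finset.insert_ne_empty]

lemma W_eq_V (k : ℕ) : W k = V k := by
  rw [V]
  symm
  calc ∑ R ∈ (Finset.range k).powerset,
        (-1 : PowerSeries ℚ) ^ R.card * ∏ j ∈ Finset.range k, zz (cc R j)
      = ∑ R ∈ (Finset.range k).powerset, ∑ g ∈ colF k ∅,
          (if R ⊆ unc g then (-1 : PowerSeries ℚ) ^ R.card * PowerSeries.X ^ wt g else 0) := by
        refine Finset.sum_congr rfl fun R hR => ?_
        rw [← A_eq, colF_filter k R (Finset.mem_powerset.1 hR), Finset.sum_filter,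
          Finset.mul_sum]
        refine Finset.sum_congr rfl fun g _ => ?_
        rw [mul_ite, mul_zero]
    _ = ∑ g ∈ colF k ∅, ∑ R ∈ (Finset.range k).powerset,
          (if R ⊆ unc g then (-1 : PowerSeries ℚ) ^ R.card * PowerSeries.X ^ wt g else 0) :=
        Finset.sum_comm
    _ = ∑ g ∈ colF k ∅,
          (if unc g = ∅ then (1 : PowerSeries ℚ) else 0) * PowerSeries.X ^ wt g := by
        refine Finset.sum_congr rfl fun g hg => ?_
        have hfil : (Finset.range k).powerset.filter (fun R => R ⊆ unc g)
            = (unc g).powerset := by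
          ext R
          simp only [Finset.mem_filter, Finset.mem_powerset]
          exact ⟨fun h => h.2, fun h => ⟨h.trans (Finset.filter_subset _ _), h⟩⟩
        rw [Finset.sum_congr rfl fun R (_ : R ∈ (Finset.range k).powerset) => by
          rw [show (if R ⊆ unc g then (-1 : PowerSeries ℚ) ^ R.card * PowerSeries.X ^ wt g else 0)
            = (if R ⊆ unc g then (-1 : PowerSeries ℚ) ^ R.card else 0) * PowerSeries.X ^ wt g
            from by rw [ite_mul, zero_mul]]]
        rw [← Finset.sum_mul, ← Finset.sum_filter, hfil, sum_neg_one_pow]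
    _ = W k := by
        rw [W, Finset.sum_filter]
        refine Finset.sum_congr rfl fun g _ => ?_
        split_ifs <;> simp


/-! ### Counting matrices -/

def gd (d k : ℕ) : Finset (Fin k → Finset ℕ) :=
  (colF k ∅).filter (fun g => unc g = ∅ ∧ wt g = d)

def toG {k : ℕ} (M : Matrix (Fin k) (Fin k) ℕ) (j : Fin k) : Finset ℕ :=
  (Finset.univ.filter fun i : Fin k => M i j ≠ 0).image Fin.val

def toM {k : ℕ} (g : Fin k → Finset ℕ) : Matrix (Fin k) (Fin k) ℕ :=
  fun i j => if (i : ℕ) ∈ g j then 1 else 0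

lemma sumIndicator {k : ℕ} (S : Finset ℕ) (hS : ∀ m ∈ S, m < k) :
    (∑ i : Fin k, if (i : ℕ) ∈ S then 1 else 0) = S.card := by
  rw [Finset.sum_boole]
  norm_cast
  refine Finset.card_bij (fun (i : Fin k) _ => (i : ℕ)) ?_ ?_ ?_
  · intro a ha; exact (Finset.mem_filter.1 ha).2
  · intro a _ b _ h; exact Fin.val_injective h
  · intro m hm
    exact ⟨⟨m, hS m hm⟩, Finset.mem_filter.2 ⟨Finset.mem_univ _, hm⟩, rfl⟩

lemma aux_forward (d k : ℕ) (M : Matrix (Fin k) (Fin k) ℕ)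
    (hM : InMatM d ⟨k, M⟩) (hE : EntriesLe 1 ⟨k, M⟩) :
    toG M ∈ gd d k ∧ k ≤ d := by
  obtain ⟨htri0, hrow0, hcol0, hsum0⟩ := hM
  have htri : ∀ i j : Fin k, (j : ℕ) < (i : ℕ) → M i j = 0 := htri0
  have hrow : ∀ i : Fin k, ∃ j : Fin k, M i j ≠ 0 := hrow0
  have hcol : ∀ j : Fin k, ∃ i : Fin k, M i j ≠ 0 := hcol0
  have hsum : (∑ i : Fin k, ∑ j : Fin k, M i j) = d := hsum0
  have hE' : ∀ i j : Fin k, M i j ≤ 1 := hE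
  have hcard : ∀ j : Fin k, (toG M j).card = ∑ i : Fin k, M i j := by
    intro j
    rw [toG, Finset.card_image_of_injective _ Fin.val_injective, Finset.card_filter]
    refine Finset.sum_congr rfl fun i _ => ?_
    have h1 := hE' i j
    by_cases h : M i j = 0
    · simp [h]
    · have h2 : M i j = 1 := by omega
      simp [h, h2]
  have hwt : wt (toG M) = d := by
    rw [wt]
    calc ∑ j, (toG M j).card = ∑ j : Fin k, ∑ i : Fin k, M i j :=
          Finset.sum_congr rfl fun j _ => hcard j
      _ = ∑ i, ∑ j, M i j := Finset.sum_comm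
      _ = d := hsum
  constructor
  · rw [gd, Finset.mem_filter]
    refine ⟨?_, ?_, hwt⟩
    · rw [colF, Fintype.mem_piFinset]
      intro j
      rw [Finset.mem_erase, Finset.mem_powerset, Finset.sdiff_empty]
      constructor
      · obtain ⟨i, hi⟩ := hcol j
        exact Finset.ne_empty_of_mem
          (Finset.mem_image.2 ⟨i, Finset.mem_filter.2 ⟨Finset.mem_univ _, hi⟩, rfl⟩)
      · intro m hm
        obtain ⟨i, hi, rfl⟩ := Finset.mem_image.1 hm
        have hine := (Finset.mem_filter.1 hi).2
        have h3 : ¬ (j : ℕ) < (i : ℕ) := fun h => hine (htri i j h)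
        exact Finset.mem_range.2 (by omega)
    · rw [unc, Finset.filter_eq_empty_iff]
      intro i hi
      have hik := Finset.mem_range.1 hi
      obtain ⟨j, hj⟩ := hrow ⟨i, hik⟩
      push_neg
      exact ⟨j, Finset.mem_image.2 ⟨⟨i, hik⟩, Finset.mem_filter.2 ⟨Finset.mem_univ _, hj⟩, rfl⟩⟩
  · have h1 : ∀ j : Fin k, 1 ≤ ∑ i : Fin k, M i j := by
      intro j
      obtain ⟨i, hi⟩ := hcol j
      calc 1 ≤ M i j := by omega
        _ ≤ ∑ i : Fin k, M i j :=
          Finset.single_le_sum (f := fun i : Fin k => M i j)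
            (fun _ _ => Nat.zero_le _) (Finset.mem_univ i)
    calc k = ∑ _j : Fin k, 1 := by simp
      _ ≤ ∑ j : Fin k, ∑ i, M i j := Finset.sum_le_sum fun j _ => h1 j
      _ = ∑ i, ∑ j, M i j := Finset.sum_comm
      _ = d := hsum

lemma aux_backward (d k : ℕ) (g : Fin k → Finset ℕ) (hg : g ∈ gd d k) :
    InMatM d ⟨k, toM g⟩ ∧ EntriesLe 1 ⟨k, toM g⟩ := by
  rw [gd, Finset.mem_filter, colF, Fintype.mem_piFinset] at hg
  obtain ⟨hpi, hunc, hwt⟩ := hg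
  have hsub : ∀ j : Fin k, g j ⊆ Finset.range ((j : ℕ) + 1) := by
    intro j
    have h := hpi j
    rw [Finset.mem_erase, Finset.mem_powerset, Finset.sdiff_empty] at h
    exact h.2
  have hne : ∀ j : Fin k, g j ≠ ∅ := by
    intro j
    have h := hpi j
    rw [Finset.mem_erase] at h
    exact h.1
  have h1 : ∀ i j : Fin k, (j : ℕ) < (i : ℕ) → toM g i j = 0 := by
    intro i j hij
    show (if (i : ℕ) ∈ g j then 1 else 0) = 0
    rw [if_neg]
    intro h
    have := Finset.mem_range.1 (hsub j h)
    omega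
  have h2 : ∀ i : Fin k, ∃ j : Fin k, toM g i j ≠ 0 := by
    intro i
    have hi : (i : ℕ) ∈ Finset.range k := Finset.mem_range.2 i.isLt
    have hna : ¬ (∀ j, (i : ℕ) ∉ g j) := by
      intro hall
      have hmem : (i : ℕ) ∈ unc g := Finset.mem_filter.2 ⟨hi, hall⟩
      rw [hunc] at hmem
      exact Finset.notMem_empty _ hmem
    push_neg at hna
    obtain ⟨j, hj⟩ := hna
    refine ⟨j, ?_⟩
    show (if (i : ℕ) ∈ g j then 1 else 0) ≠ 0
    rw [if_pos hj]
    exact one_ne_zero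
  have h3 : ∀ j : Fin k, ∃ i : Fin k, toM g i j ≠ 0 := by
    intro j
    obtain ⟨m, hm⟩ := Finset.nonempty_iff_ne_empty.2 (hne j)
    have hjk := j.isLt
    have hmk : m < k := by
      have := Finset.mem_range.1 (hsub j hm)
      omega
    refine ⟨⟨m, hmk⟩, ?_⟩
    show (if ((⟨m, hmk⟩ : Fin k) : ℕ) ∈ g j then 1 else 0) ≠ 0
    rw [if_pos hm]
    exact one_ne_zero
  have h4 : (∑ i : Fin k, ∑ j : Fin k, toM g i j) = d := by
    rw [show (∑ i : Fin k, ∑ j : Fin k, toM g i j) = ∑ j : Fin k, ∑ i : Fin k, toM g i j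
      from Finset.sum_comm]
    calc ∑ j : Fin k, ∑ i : Fin k, toM g i j = ∑ j : Fin k, (g j).card := by
          refine Finset.sum_congr rfl fun j _ => ?_
          refine sumIndicator (g j) fun m hm => ?_
          have hr := Finset.mem_range.1 (hsub j hm)
          have := j.isLt
          omega
      _ = d := hwt
  have h5 : ∀ i j : Fin k, toM g i j ≤ 1 := by
    intro i j
    show (if (i : ℕ) ∈ g j then 1 else 0) ≤ 1
    split_ifs <;> omega
  exact ⟨⟨h1, h2, h3, h4⟩, h5⟩

lemma toM_toG {k : ℕ} (M : Matrix (Fin k) (Fin k) ℕ) (hE : ∀ i j, M i j ≤ 1) :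
    toM (toG M) = M := by
  funext i j
  show (if (i : ℕ) ∈ toG M j then 1 else 0) = M i j
  have hiff : (i : ℕ) ∈ toG M j ↔ M i j ≠ 0 := by
    rw [toG, Finset.mem_image]
    constructor
    · rintro ⟨i', hi', he⟩
      obtain rfl : i' = i := Fin.val_injective he
      exact (Finset.mem_filter.1 hi').2
    · intro h
      exact ⟨i, Finset.mem_filter.2 ⟨Finset.mem_univ _, h⟩, rfl⟩
  by_cases h : M i j = 0
  · rw [if_neg (fun hh => (hiff.1 hh) h), h]
  · rw [if_pos (hiff.2 h)]
    have := hE i j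
    omega

lemma toG_toM {k : ℕ} (g : Fin k → Finset ℕ)
    (hsub : ∀ j : Fin k, g j ⊆ Finset.range ((j : ℕ) + 1)) :
    toG (toM g) = g := by
  funext j
  ext m
  rw [toG, Finset.mem_image]
  constructor
  · rintro ⟨i, hi, rfl⟩
    have h := (Finset.mem_filter.1 hi).2
    by_contra hc
    exact h (by show (if (i : ℕ) ∈ g j then 1 else 0) = 0; rw [if_neg hc])
  · intro hm
    have hjk := j.isLt
    have hmk : m < k := by
      have := Finset.mem_range.1 (hsub j hm)
      omega
    refine ⟨⟨m, hmk⟩, Finset.mem_filter.2 ⟨Finset.mem_univ _, ?_⟩, rfl⟩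
    show (if ((⟨m, hmk⟩ : Fin k) : ℕ) ∈ g j then 1 else 0) ≠ 0
    rw [if_pos hm]
    exact one_ne_zero

lemma count_eq (d : ℕ) :
    Nat.card {A : Σ d' : ℕ, Matrix (Fin d') (Fin d') ℕ // InMatM d A ∧ EntriesLe 1 A}
      = ∑ k ∈ Finset.range (d + 1), (gd d k).card := by
  have e : {A : Σ d' : ℕ, Matrix (Fin d') (Fin d') ℕ // InMatM d A ∧ EntriesLe 1 A}
      ≃ (Σ k : Fin (d + 1), {g : Fin (k : ℕ) → Finset ℕ // g ∈ gd d (k : ℕ)}) := by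
    refine ⟨fun A => ⟨⟨A.1.1, Nat.lt_succ_of_le (aux_forward d A.1.1 A.1.2 A.2.1 A.2.2).2⟩,
        ⟨toG A.1.2, (aux_forward d A.1.1 A.1.2 A.2.1 A.2.2).1⟩⟩,
      fun p => ⟨⟨(p.1 : ℕ), toM p.2.1⟩, aux_backward d (p.1 : ℕ) p.2.1 p.2.2⟩, ?_, ?_⟩
    · intro A
      apply Subtype.ext
      show (⟨A.1.1, toM (toG A.1.2)⟩ : Σ d', Matrix (Fin d') (Fin d') ℕ) = A.1
      rw [toM_toG A.1.2 (fun i j => A.2.2 i j)]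
    · intro p
      have hsub : ∀ j : Fin (p.1 : ℕ), p.2.1 j ⊆ Finset.range ((j : ℕ) + 1) := by
        have hg := p.2.2
        simp only [gd, Finset.mem_filter, colF, Fintype.mem_piFinset] at hg
        intro j
        have h := hg.1 j
        rw [Finset.mem_erase, Finset.mem_powerset, Finset.sdiff_empty] at h
        exact h.2
      refine Sigma.ext (Fin.ext rfl) (heq_of_eq (Subtype.ext ?_))
      exact toG_toM p.2.1 hsub
  rw [Nat.card_congr e, Nat.card_eq_fintype_card, Fintype.card_sigma]
  simp_rw [Fintype.card_coe]
  exact Fin.sum_univ_eq_sum_range (fun k => (gd d k).card) (d + 1)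

lemma coeff_W (d k : ℕ) :
    (PowerSeries.coeff (R := ℚ) d) (W k) = ((gd d k).card : ℚ) := by
  rw [W, map_sum]
  rw [Finset.sum_congr rfl fun g _ => PowerSeries.coeff_X_pow d (wt g)]
  rw [Finset.sum_boole, gd, Finset.filter_filter]
  congr 2
  refine Finset.filter_congr fun g _ => ?_
  rw [eq_comm]
  tauto


lemma main_sum (d : ℕ) :
    ∑ n ∈ Finset.range (d + 1), Sd d n = ∑ k ∈ Finset.range (d + 1), W k := by
  calc ∑ n ∈ Finset.range (d + 1), Sd d n
      = ∑ n ∈ Finset.range (d + 1), ∑ k ∈ Finset.range (d + 1), FF k n :=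
        Finset.sum_congr rfl fun n _ => rfl
    _ = ∑ k ∈ Finset.range (d + 1), ∑ n ∈ Finset.range (d + 1), FF k n := Finset.sum_comm
    _ = ∑ k ∈ Finset.range (d + 1), V k := by
        refine Finset.sum_congr rfl fun k hk => ?_
        have hk' : k ≤ d := by
          have := Finset.mem_range.1 hk
          omega
        calc ∑ n ∈ Finset.range (d + 1), FF k n
            = ∑ n ∈ Finset.range (d + 1), Vp k n :=
              Finset.sum_congr rfl fun n _ => (Vp_eq_FF k n).symm
          _ = V k := (V_eq_sum_Vp d k hk').symm
    _ = ∑ k ∈ Finset.range (d + 1), W k :=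
        Finset.sum_congr rfl fun k _ => (W_eq_V k).symm

theorem final (d N : ℕ) (hdN : d < N) :
    (Nat.card {A : Σ d' : ℕ, Matrix (Fin d') (Fin d') ℕ //
        InMatM d A ∧ EntriesLe 1 A} : ℚ) =
      (PowerSeries.coeff (R := ℚ) d) (∑ n ∈ Finset.range N, ∏ i ∈ Finset.Icc 1 n,
        (1 - ((1 + PowerSeries.X : PowerSeries ℚ)⁻¹) ^ i)) := by
  have key1 : ∀ n ∈ Finset.range N, n ∉ Finset.range (d + 1) →
      (PowerSeries.coeff (R := ℚ) d) (∏ i ∈ Finset.Icc 1 n, tt i) = 0 := by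
    intro n _ hn
    have hdn : d + 1 ≤ n := by
      rw [Finset.mem_range] at hn
      omega
    have h1 : (∏ _i ∈ Finset.Icc 1 n, (PowerSeries.X : PowerSeries ℚ))
        ∣ ∏ i ∈ Finset.Icc 1 n, tt i :=
      Finset.prod_dvd_prod_of_dvd _ _ (fun i _ => X_dvd_tt i)
    rw [Finset.prod_const, Nat.card_Icc] at h1
    have hdvd : (PowerSeries.X : PowerSeries ℚ) ^ (d + 1) ∣ ∏ i ∈ Finset.Icc 1 n, tt i :=
      dvd_trans (pow_dvd_pow _ (by omega)) h1
    exact PowerSeries.X_pow_dvd_iff.1 hdvd d (Nat.lt_succ_self d)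
  have key2 : ∀ n ∈ Finset.range (d + 1),
      (PowerSeries.coeff (R := ℚ) d) (Sd d n) = (PowerSeries.coeff (R := ℚ) d) (∏ i ∈ Finset.Icc 1 n, tt i) := by
    intro n _
    have h := PowerSeries.X_pow_dvd_iff.1 (analytic d n) d (Nat.lt_succ_self d)
    rw [map_sub] at h
    linarith [h]
  calc (Nat.card {A : Σ d' : ℕ, Matrix (Fin d') (Fin d') ℕ //
        InMatM d A ∧ EntriesLe 1 A} : ℚ)
      = ∑ k ∈ Finset.range (d + 1), ((gd d k).card : ℚ) := by
        rw [count_eq d]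
        push_cast
        rfl
    _ = ∑ k ∈ Finset.range (d + 1), (PowerSeries.coeff (R := ℚ) d) (W k) :=
        Finset.sum_congr rfl fun k _ => (coeff_W d k).symm
    _ = (PowerSeries.coeff (R := ℚ) d) (∑ k ∈ Finset.range (d + 1), W k) := (map_sum _ _ _).symm
    _ = (PowerSeries.coeff (R := ℚ) d) (∑ n ∈ Finset.range (d + 1), Sd d n) := by rw [main_sum]
    _ = ∑ n ∈ Finset.range (d + 1), (PowerSeries.coeff (R := ℚ) d) (Sd d n) := map_sum _ _ _
    _ = ∑ n ∈ Finset.range (d + 1), (PowerSeries.coeff (R := ℚ) d) (∏ i ∈ Finset.Icc 1 n, tt i) :=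
        Finset.sum_congr rfl key2
    _ = ∑ n ∈ Finset.range N, (PowerSeries.coeff (R := ℚ) d) (∏ i ∈ Finset.Icc 1 n, tt i) :=
        Finset.sum_subset (Finset.range_subset_range.2 hdN) key1
    _ = (PowerSeries.coeff (R := ℚ) d) (∑ n ∈ Finset.range N, ∏ i ∈ Finset.Icc 1 n, tt i) :=
        (map_sum _ _ _).symm
    _ = (PowerSeries.coeff (R := ℚ) d) (∑ n ∈ Finset.range N, ∏ i ∈ Finset.Icc 1 n,
          (1 - ((1 + PowerSeries.X : PowerSeries ℚ)⁻¹) ^ i)) := rfl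

end

end Jov


/-- Jovovic's conjecture: the generating function of upper triangular
binary matrices with no zero row or column, by sum of entries, is
`Σ_{n≥0} ∏_{i=1}^n (1 - (1+x)^{-i})` (coefficientwise). -/
theorem stmt_5 :
    ∀ d N : ℕ, d < N →
      (Nat.card {A : Σ d' : ℕ, Matrix (Fin d') (Fin d') ℕ //
          InMatM d A ∧ EntriesLe 1 A} : ℚ) =
        (PowerSeries.coeff (R := ℚ) d) (∑ n ∈ Finset.range N, ∏ i ∈ Finset.Icc 1 n,
          (1 - ((1 + PowerSeries.X : PowerSeries ℚ)⁻¹) ^ i)) := by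
  intro d N hdN
  exact Jov.final d N hdN
end

section
/- For every n ≥ 1, the number of ascent sequences of length n equals Σ_{m=1}^{n} k_m · C(n−1, m−1), where k_m is the number of primitive ascent sequences of length m and C denotes the binomial coefficient. Equivalently, every ascent sequence of length n is obtained from a unique primitive ascent sequence (b_1,…,b_m) and a unique composition (m_1,…,m_m) of n into m positive parts by repeating each b_i exactly m_i times. -/
-- recursion lemmas for ascList
lemma ascList_nil : ascList [] = 0 := rfl

lemma ascList_single (x : ℕ) : ascList [x] = 0 := rfl

lemma ascList_cons_cons (x y : ℕ) (t : List ℕ) :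
    ascList (x :: y :: t) = (if x < y then 1 else 0) + ascList (y :: t) := by
  unfold ascList
  simp only [List.length_cons, Nat.add_sub_cancel]
  rw [List.range_succ_eq_map, List.countP_cons, List.countP_map]
  simp only [List.getD_cons_zero, List.getD_cons_succ]
  rw [Nat.add_comm]
  congr 1
  · simp

lemma ascList_cons_congr (x : ℕ) {l₁ l₂ : List ℕ} (hh : l₁.head? = l₂.head?)
    (ha : ascList l₁ = ascList l₂) : ascList (x :: l₁) = ascList (x :: l₂) := by
  cases l₁ with
  | nil =>
    cases l₂ with
    | nil => rfl
    | cons b t => simp at hh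
  | cons a s =>
    cases l₂ with
    | nil => simp at hh
    | cons b t =>
      simp only [List.head?_cons, Option.some.injEq] at hh
      subst hh
      rw [ascList_cons_cons, ascList_cons_cons, ha]

lemma ascList_le_append (u v : List ℕ) : ascList u ≤ ascList (u ++ v) := by
  induction u with
  | nil => simp [ascList_nil]
  | cons c u ih =>
    cases u with
    | nil => simp [ascList_single]
    | cons d t =>
      rw [ascList_cons_cons]
      simp only [List.cons_append, ascList_cons_cons]
      exact Nat.add_le_add_left ih _

lemma ascList_dup (a : List ℕ) (x : ℕ) (b : List ℕ) :
    ascList (a ++ x :: x :: b) = ascList (a ++ x :: b) := by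
  induction a with
  | nil => simp [ascList_cons_cons]
  | cons c a ih =>
    have hh : (a ++ x :: x :: b).head? = (a ++ x :: b).head? := by
      cases a <;> rfl
    simpa using ascList_cons_congr c hh ih

lemma isAscentSeq_dup (a : List ℕ) (x : ℕ) (b : List ℕ) :
    IsAscentSeq (a ++ x :: b) ↔ IsAscentSeq (a ++ x :: x :: b) := by
  set la := a.length with hla
  set lb := b.length with hlb
  have hL : a ++ x :: x :: b = (a ++ [x]) ++ (x :: b) := by simp
  have hM : a ++ x :: b = (a ++ [x]) ++ b := by simp
  have hax : (a ++ [x]).length = la + 1 := by simp [hla]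
  have hLlen : (a ++ x :: x :: b).length = la + 2 + lb := by simp; omega
  have hMlen : (a ++ x :: b).length = la + 1 + lb := by simp; omega
  have g1 : ∀ i ≤ la, (a ++ x :: x :: b).getD i 0 = (a ++ x :: b).getD i 0 := by
    intro i hi
    have e1 := List.getD_append (a ++ [x]) (x :: b) 0 i (by omega)
    have e2 := List.getD_append (a ++ [x]) b 0 i (by omega)
    rw [hL, hM, e1, e2]
  have g2 : (a ++ x :: x :: b).getD (la + 1) 0 = x := by
    rw [hL, List.getD_append_right _ _ _ _ (by omega), hax]
    simp
  have g3 : ∀ j, (a ++ x :: x :: b).getD (la + 2 + j) 0 = b.getD j 0 := by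
    intro j
    rw [hL, List.getD_append_right _ _ _ _ (by omega), hax]
    have : la + 2 + j - (la + 1) = j + 1 := by omega
    rw [this, List.getD_cons_succ]
  have g4 : ∀ j, (a ++ x :: b).getD (la + 1 + j) 0 = b.getD j 0 := by
    intro j
    rw [hM, List.getD_append_right _ _ _ _ (by omega), hax]
    have : la + 1 + j - (la + 1) = j := by omega
    rw [this]
  have g5 : (a ++ x :: b).getD la 0 = x := by
    rw [hM, List.getD_append _ _ _ _ (by omega), List.getD_append_right _ _ _ _ (by omega)]
    simp [hla]
  have t1 : ∀ i ≤ la + 1, (a ++ x :: x :: b).take i = (a ++ x :: b).take i := by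
    intro i hi
    rw [List.take_append, List.take_append]
    have : i - a.length = 0 ∨ i - a.length = 1 := by omega
    rcases this with h0 | h0 <;> simp [h0]
  have t2 : ∀ j, ascList ((a ++ x :: x :: b).take (la + 2 + j)) =
      ascList ((a ++ x :: b).take (la + 1 + j)) := by
    intro j
    have e1 : (a ++ x :: x :: b).take (la + 2 + j) = a ++ x :: x :: b.take j := by
      rw [hL]
      have : la + 2 + j = (a ++ [x]).length + (j + 1) := by omega
      rw [this, List.take_length_add_append]
      simp
    have e2 : (a ++ x :: b).take (la + 1 + j) = a ++ x :: b.take j := by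
      rw [hM]
      have : la + 1 + j = (a ++ [x]).length + j := by omega
      rw [this, List.take_length_add_append]
      simp
    rw [e1, e2, ascList_dup]
  have tA : (a ++ x :: b).take la = a := List.take_left' rfl
  have tB : (a ++ x :: b).take (la + 1) = a ++ [x] := by
    rw [hM]; exact List.take_left' hax
  constructor
  · rintro ⟨h0, hi⟩
    refine ⟨by rw [g1 0 (by omega)]; exact h0, ?_⟩
    intro i hipos hilen
    rw [hLlen] at hilen
    rcases Nat.lt_or_ge i (la + 1) with hc | hc
    · rw [g1 i (by omega), t1 i (by omega)]
      exact hi i hipos (by omega)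
    rcases Nat.eq_or_lt_of_le hc with hc' | hc'
    · -- i = la + 1
      subst hc'
      rw [g2, t1 _ le_rfl, tB]
      rcases Nat.eq_zero_or_pos la with h0' | hpos
      · have ha0 : a = [] := List.length_eq_zero_iff.mp (by omega)
        subst ha0
        simp only [List.nil_append, List.getD_cons_zero] at h0
        omega
      · have hx := hi la hpos (by omega)
        rw [g5, tA] at hx
        exact hx.trans (by
          have := ascList_le_append a [x]
          omega)
    · -- i ≥ la + 2
      obtain ⟨j, rfl⟩ : ∃ j, i = la + 2 + j := ⟨i - la - 2, by omega⟩
      rw [g3, t2]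
      have := hi (la + 1 + j) (by omega) (by omega)
      rwa [g4] at this
  · rintro ⟨h0, hi⟩
    refine ⟨by rw [← g1 0 (by omega)]; exact h0, ?_⟩
    intro i hipos hilen
    rw [hMlen] at hilen
    rcases Nat.lt_or_ge i (la + 1) with hc | hc
    · rw [← g1 i (by omega), ← t1 i (by omega)]
      exact hi i hipos (by omega)
    · obtain ⟨j, rfl⟩ : ∃ j, i = la + 1 + j := ⟨i - la - 1, by omega⟩
      rw [g4, ← t2]
      have := hi (la + 2 + j) (by omega) (by omega)
      rwa [g3] at this

def runs : List ℕ → List (ℕ × ℕ)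
  | [] => []
  | x :: l => match runs l with
    | [] => [(x, 1)]
    | (y, k) :: t => if x = y then (x, k + 1) :: t else (x, 1) :: (y, k) :: t

def unruns (r : List (ℕ × ℕ)) : List ℕ := r.flatMap fun p => List.replicate p.2 p.1

@[simp] lemma unruns_nil : unruns [] = [] := rfl

@[simp] lemma unruns_cons (p : ℕ × ℕ) (r : List (ℕ × ℕ)) :
    unruns (p :: r) = List.replicate p.2 p.1 ++ unruns r := rfl

lemma runs_eq_nil_iff {l : List ℕ} : runs l = [] ↔ l = [] := by
  cases l with
  | nil => simp [runs]
  | cons x l =>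
    simp only [runs]
    constructor
    · intro h
      cases hr : runs l with
      | nil => simp [hr] at h
      | cons p t =>
        obtain ⟨y, k⟩ := p
        rw [hr] at h
        by_cases hxy : x = y <;> simp [hxy] at h
    · intro h; simp at h

lemma runs_head_fst {x : ℕ} {l : List ℕ} : ((runs (x :: l)).map Prod.fst).head? = some x := by
  simp only [runs]
  cases hr : runs l with
  | nil => simp
  | cons p t =>
    obtain ⟨y, k⟩ := p
    by_cases hxy : x = y <;> simp [hxy]

lemma unruns_runs (l : List ℕ) : unruns (runs l) = l := by
  induction l with
  | nil => rfl
  | cons x l ih =>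
    simp only [runs]
    cases hr : runs l with
    | nil =>
      rw [hr] at ih
      simp at ih
      simp [ih, unruns]
    | cons p t =>
      obtain ⟨y, k⟩ := p
      rw [hr] at ih
      dsimp only
      by_cases hxy : x = y
      · subst hxy
        rw [if_pos rfl]
        simp only [unruns_cons] at ih ⊢
        rw [List.replicate_succ, List.cons_append, ih]
      · rw [if_neg hxy]
        simp only [unruns_cons, List.replicate_one] at ih ⊢
        simp [ih]

lemma runs_pos (l : List ℕ) : ∀ p ∈ runs l, 0 < p.2 := by
  induction l with
  | nil => simp [runs]
  | cons x l ih =>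
    simp only [runs]
    cases hr : runs l with
    | nil => simp
    | cons p t =>
      obtain ⟨y, k⟩ := p
      rw [hr] at ih
      dsimp only
      by_cases hxy : x = y
      · subst hxy
        rw [if_pos rfl]
        intro q hq
        rcases List.mem_cons.mp hq with rfl | h
        · simp
        · exact ih q (List.mem_cons_of_mem _ h)
      · rw [if_neg hxy]
        intro q hq
        rcases List.mem_cons.mp hq with rfl | h
        · simp
        · exact ih q h

lemma runs_chain' (l : List ℕ) : (runs l).Chain' (fun p q => p.1 ≠ q.1) := by
  induction l with
  | nil => simp [runs]; exact List.isChain_nil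
  | cons x l ih =>
    simp only [runs]
    cases hr : runs l with
    | nil => simp; exact List.isChain_singleton _
    | cons p t =>
      obtain ⟨y, k⟩ := p
      rw [hr] at ih
      dsimp only
      by_cases hxy : x = y
      · subst hxy
        rw [if_pos rfl]
        simp only [List.Chain'] at ih ⊢; rw [List.isChain_cons] at ih ⊢
        exact ⟨ih.1, ih.2⟩
      · rw [if_neg hxy]
        simp only [List.Chain']; rw [List.isChain_cons_cons]
        exact ⟨hxy, ih⟩

lemma runs_cons (x : ℕ) (l : List ℕ) :
    runs (x :: l) = match runs l with
      | [] => [(x, 1)]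
      | (y, k) :: t => if x = y then (x, k + 1) :: t else (x, 1) :: (y, k) :: t := rfl

lemma runs_cons_ne {x : ℕ} {l : List ℕ} (h : l.head? ≠ some x) :
    runs (x :: l) = (x, 1) :: runs l := by
  cases l with
  | nil => rfl
  | cons y t =>
    have hz := @runs_head_fst y t
    rw [runs_cons]
    cases hr : runs (y :: t) with
    | nil => exact absurd (runs_eq_nil_iff.mp hr) (by simp)
    | cons p t' =>
      obtain ⟨z, k⟩ := p
      rw [hr] at hz
      simp only [List.map_cons, List.head?_cons, Option.some.injEq] at hz
      subst hz
      have hxz : x ≠ z := by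
        intro e; exact h (by simp [e])
      dsimp only
      rw [if_neg hxz]

lemma runs_cons_head {x : ℕ} {l : List ℕ} {k : ℕ} {t : List (ℕ × ℕ)}
    (h : runs l = (x, k) :: t) : runs (x :: l) = (x, k + 1) :: t := by
  rw [runs_cons, h]
  dsimp only
  rw [if_pos rfl]

lemma runs_replicate_append {x : ℕ} {m : List ℕ} (hm : m.head? ≠ some x) :
    ∀ k, 0 < k → runs (List.replicate k x ++ m) = (x, k) :: runs m := by
  intro k
  induction k with
  | zero => omega
  | succ k ih =>
    intro _
    rcases Nat.eq_zero_or_pos k with rfl | hk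
    · simpa using runs_cons_ne hm
    · rw [List.replicate_succ, List.cons_append, runs_cons_head (ih hk)]

lemma unruns_head? {r : List (ℕ × ℕ)} (hp : ∀ p ∈ r, 0 < p.2) :
    (unruns r).head? = (r.map Prod.fst).head? := by
  cases r with
  | nil => rfl
  | cons p t =>
    obtain ⟨y, j⟩ := p
    have hj : 0 < j := hp (y, j) (by simp)
    obtain ⟨j', rfl⟩ : ∃ j', j = j' + 1 := ⟨j - 1, by omega⟩
    simp [unruns_cons, List.replicate_succ]

lemma runs_unruns {r : List (ℕ × ℕ)} (hc : r.Chain' (fun p q => p.1 ≠ q.1))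
    (hp : ∀ p ∈ r, 0 < p.2) : runs (unruns r) = r := by
  induction r with
  | nil => rfl
  | cons p t ih =>
    obtain ⟨x, k⟩ := p
    have hk : 0 < k := hp (x, k) (by simp)
    have hct : t.Chain' (fun p q => p.1 ≠ q.1) := (List.isChain_cons.mp hc).2
    have hpt : ∀ p ∈ t, 0 < p.2 := fun q hq => hp q (List.mem_cons_of_mem _ hq)
    have hh : (unruns t).head? ≠ some x := by
      rw [unruns_head? hpt]
      cases t with
      | nil => simp
      | cons q t' =>
        have hxq : (x, k).1 ≠ q.1 := (List.isChain_cons.mp hc).1 q (by simp)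
        simp only [List.map_cons, List.head?_cons, ne_eq, Option.some.injEq]
        exact fun e => hxq e.symm
    rw [unruns_cons, runs_replicate_append hh k hk, ih hct hpt]

lemma prim_cons_congr (c : ℕ) {L L' : List ℕ}
    (h : (runs L).map Prod.fst = (runs L').map Prod.fst) :
    (runs (c :: L)).map Prod.fst = (runs (c :: L')).map Prod.fst := by
  rw [runs_cons, runs_cons]
  cases hr : runs L with
  | nil =>
    rw [hr] at h
    cases hr' : runs L' with
    | nil => rfl
    | cons p t' => rw [hr'] at h; simp at h
  | cons p t =>
    obtain ⟨y, k⟩ := p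
    rw [hr] at h
    cases hr' : runs L' with
    | nil => rw [hr'] at h; simp at h
    | cons q t' =>
      obtain ⟨y', k'⟩ := q
      rw [hr'] at h
      simp only [List.map_cons] at h
      obtain ⟨rfl, ht⟩ : y = y' ∧ t.map Prod.fst = t'.map Prod.fst :=
        ⟨by injection h, by injection h⟩
      by_cases hcy : c = y
      · dsimp only; rw [if_pos hcy, if_pos hcy]; simp [ht]
      · dsimp only; rw [if_neg hcy, if_neg hcy]; simp [ht]

lemma prim_dup (a : List ℕ) (x : ℕ) (b : List ℕ) :
    (runs (a ++ x :: x :: b)).map Prod.fst = (runs (a ++ x :: b)).map Prod.fst := by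
  induction a with
  | nil =>
    simp only [List.nil_append]
    have hz := @runs_head_fst x b
    cases hr : runs (x :: b) with
    | nil => exact absurd (runs_eq_nil_iff.mp hr) (by simp)
    | cons p t =>
      obtain ⟨z, k⟩ := p
      rw [hr] at hz
      simp only [List.map_cons, List.head?_cons, Option.some.injEq] at hz
      subst hz
      rw [runs_cons_head hr]
      simp
  | cons c a ih => exact prim_cons_congr c ih

lemma prim_of_chain' {l : List ℕ} (h : l.Chain' (· ≠ ·)) :
    (runs l).map Prod.fst = l := by
  induction l with
  | nil => rfl
  | cons x t ih =>
    have h2 := (List.isChain_cons.mp h).2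
    have hh : t.head? ≠ some x := by
      cases t with
      | nil => simp
      | cons y t' =>
        have := (List.isChain_cons.mp h).1 y (by simp)
        simpa using fun e => this e.symm
    rw [runs_cons_ne hh]
    simp [ih h2]

lemma exists_dup_of_not_chain' {l : List ℕ} (h : ¬ l.Chain' (· ≠ ·)) :
    ∃ a x b, l = a ++ x :: x :: b := by
  induction l with
  | nil => exact absurd List.isChain_nil h
  | cons x t ih =>
    cases t with
    | nil => exact absurd (List.isChain_singleton x) h
    | cons y t' =>
      simp only [List.Chain'] at h; rw [List.isChain_cons_cons] at h
      by_cases hxy : x = y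
      · exact ⟨[], x, t', by simp [hxy]⟩
      · have : ¬ (y :: t').Chain' (· ≠ ·) := fun hc => h ⟨hxy, hc⟩
        obtain ⟨a, z, b, he⟩ := ih this
        exact ⟨x :: a, z, b, by simp [he]⟩

lemma asc_iff_prim (l : List ℕ) : IsAscentSeq l ↔ IsAscentSeq ((runs l).map Prod.fst) := by
  suffices H : ∀ n l, List.length l = n → (IsAscentSeq l ↔ IsAscentSeq ((runs l).map Prod.fst)) from
    H l.length l rfl
  intro n
  induction n using Nat.strong_induction_on with
  | _ n ih =>
    intro l hn
    by_cases hc : l.Chain' (· ≠ ·)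
    · rw [prim_of_chain' hc]
    · obtain ⟨a, x, b, rfl⟩ := exists_dup_of_not_chain' hc
      rw [← isAscentSeq_dup, prim_dup]
      exact ih (a ++ x :: b).length (by simp at hn ⊢; omega) _ rfl

lemma unruns_length (r : List (ℕ × ℕ)) : (unruns r).length = (r.map Prod.snd).sum := by
  induction r with
  | nil => rfl
  | cons p t ih => simp [unruns_cons, ih]

lemma sum_runs_snd (l : List ℕ) : ((runs l).map Prod.snd).sum = l.length := by
  rw [← unruns_length, unruns_runs]

lemma ascList_le_length (l : List ℕ) : ascList l ≤ l.length := by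
  unfold ascList
  calc (List.range (l.length - 1)).countP _ ≤ (List.range (l.length - 1)).length :=
        List.countP_le_length
  _ ≤ l.length := by simp [Nat.sub_le]

lemma asc_entry_le {l : List ℕ} (h : IsAscentSeq l) : ∀ x ∈ l, x ≤ l.length := by
  intro x hx
  obtain ⟨i, hi, hix⟩ := List.mem_iff_getElem.mp hx
  have hgd : l.getD i 0 = x := by rw [List.getD_eq_getElem l 0 hi, hix]
  rcases Nat.eq_zero_or_pos i with rfl | hpos
  · have h1 := h.1
    rw [hgd] at h1
    omega
  · have := h.2 i hpos hi
    rw [hgd] at this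
    have h2 := ascList_le_length (l.take i)
    simp only [List.length_take] at h2
    omega

lemma finite_bounded (n b : ℕ) : {l : List ℕ | l.length = n ∧ ∀ x ∈ l, x ≤ b}.Finite := by
  apply Set.Finite.subset ((List.finite_length_eq (Fin (b + 1)) n).image (List.map Fin.val))
  rintro l ⟨hlen, hb⟩
  refine ⟨l.map (fun x => ⟨min x b, by omega⟩), by simp [hlen], ?_⟩
  rw [List.map_map]
  conv_rhs => rw [← List.map_id l]
  apply List.map_congr_left
  intro x hx
  have := hb x hx
  simp [Nat.min_eq_left this]

lemma finite_subtype_list {P : List ℕ → Prop} (n b : ℕ)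
    (h : ∀ l, P l → l.length = n ∧ ∀ x ∈ l, x ≤ b) : Finite {l : List ℕ // P l} := by
  have : {l : List ℕ | P l} ⊆ {l : List ℕ | l.length = n ∧ ∀ x ∈ l, x ≤ b} := fun l hl => h l hl
  exact ((finite_bounded n b).subset this).to_subtype

lemma finite_comp (n m : ℕ) :
    Finite {c : List ℕ // c.length = m ∧ (∀ x ∈ c, 0 < x) ∧ c.sum = n} := by
  apply finite_subtype_list m n
  rintro c ⟨h1, _h2, h3⟩
  exact ⟨h1, fun x hx => h3 ▸ List.le_sum_of_mem hx⟩

lemma comp_card (N : ℕ) : ∀ m : ℕ,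
    Nat.card {c : List ℕ // c.length = m + 1 ∧ (∀ x ∈ c, 0 < x) ∧ c.sum = N + 1} =
      Nat.choose N m := by
  induction N with
  | zero =>
    intro m
    cases m with
    | zero =>
      have key : ∀ c : {c : List ℕ // c.length = 1 ∧ (∀ x ∈ c, 0 < x) ∧ c.sum = 1},
          c = ⟨[1], by simp⟩ := by
        rintro ⟨c, h1, h2, h3⟩
        obtain ⟨a, rfl⟩ : ∃ a, c = [a] := List.length_eq_one_iff.mp h1
        simp only [List.sum_cons, List.sum_nil] at h3
        simp [Subtype.ext_iff]
        omega
      haveI : Nonempty _ := ⟨(⟨[1], by simp⟩ : {c : List ℕ // c.length = 1 ∧ (∀ x ∈ c, 0 < x) ∧ c.sum = 1})⟩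
      haveI : Subsingleton {c : List ℕ // c.length = 1 ∧ (∀ x ∈ c, 0 < x) ∧ c.sum = 1} :=
        ⟨fun a b => (key a).trans (key b).symm⟩
      simp [Nat.card_unique]
    | succ m =>
      haveI : IsEmpty {c : List ℕ // c.length = m + 2 ∧ (∀ x ∈ c, 0 < x) ∧ c.sum = 1} := by
        constructor
        rintro ⟨c, h1, h2, h3⟩
        have := List.length_le_sum_of_one_le c (fun i hi => h2 i hi)
        omega
      simp [Nat.card_of_isEmpty]
  | succ N ihN =>
    intro m
    cases m with
    | zero =>
      have key : ∀ c : {c : List ℕ // c.length = 1 ∧ (∀ x ∈ c, 0 < x) ∧ c.sum = N + 2},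
          c = ⟨[N + 2], by simp⟩ := by
        rintro ⟨c, h1, h2, h3⟩
        obtain ⟨a, rfl⟩ : ∃ a, c = [a] := List.length_eq_one_iff.mp h1
        simp only [List.sum_cons, List.sum_nil] at h3
        simp [Subtype.ext_iff]
        omega
      haveI : Nonempty _ := ⟨(⟨[N + 2], by simp⟩ :
        {c : List ℕ // c.length = 1 ∧ (∀ x ∈ c, 0 < x) ∧ c.sum = N + 2})⟩
      haveI : Subsingleton {c : List ℕ // c.length = 1 ∧ (∀ x ∈ c, 0 < x) ∧ c.sum = N + 2} :=
        ⟨fun a b => (key a).trans (key b).symm⟩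
      simp [Nat.card_unique]
    | succ m =>
      haveI := finite_comp (N + 1) (m + 1)
      haveI := finite_comp (N + 1) (m + 2)
      haveI := finite_comp (N + 2) (m + 2)
      -- bijection splitting on whether the first part equals 1
      have hcard : Nat.card {c : List ℕ // c.length = m + 2 ∧ (∀ x ∈ c, 0 < x) ∧ c.sum = N + 2} =
          Nat.card {c : List ℕ // c.length = m + 1 ∧ (∀ x ∈ c, 0 < x) ∧ c.sum = N + 1} +
          Nat.card {c : List ℕ // c.length = m + 2 ∧ (∀ x ∈ c, 0 < x) ∧ c.sum = N + 1} := by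
        rw [← Nat.card_sum]
        apply Nat.card_congr
        apply Equiv.ofBijective (f := fun c =>
          if h1 : c.1.head! = 1 then
            Sum.inl ⟨c.1.tail, by
              obtain ⟨c, hc⟩ := c
              dsimp only at h1 ⊢
              have hne : c ≠ [] := by intro h; rw [h] at hc; simp at hc
              have hcons := List.cons_head!_tail hne
              refine ⟨?_, fun x hx => hc.2.1 x (by rw [← hcons]; exact List.mem_cons_of_mem _ hx), ?_⟩
              · have := hc.1
                rw [← hcons] at this
                simpa using this
              · have := hc.2.2
                rw [← hcons] at this
                simp only [List.sum_cons] at this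
                omega⟩
          else
            Sum.inr ⟨(c.1.head! - 1) :: c.1.tail, by
              obtain ⟨c, hc⟩ := c
              dsimp only at h1 ⊢
              have hne : c ≠ [] := by intro h; rw [h] at hc; simp at hc
              have hcons := List.cons_head!_tail hne
              have hpos : 0 < c.head! := hc.2.1 _ (by rw [← hcons]; simp)
              refine ⟨?_, ?_, ?_⟩
              · have := hc.1
                rw [← hcons] at this
                simpa using this
              · intro x hx
                rcases List.mem_cons.mp hx with rfl | hx
                · omega
                · exact hc.2.1 x (by rw [← hcons]; exact List.mem_cons_of_mem _ hx)
              · have := hc.2.2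
                rw [← hcons] at this
                simp only [List.sum_cons] at this ⊢
                omega⟩)
        constructor
        · rintro ⟨c, hc⟩ ⟨c', hc'⟩ hf
          have hne : c ≠ [] := by intro h; rw [h] at hc; simp at hc
          have hne' : c' ≠ [] := by intro h; rw [h] at hc'; simp at hc'
          by_cases h1 : c.head! = 1 <;> by_cases h1' : c'.head! = 1 <;>
            simp only [h1, h1', dif_pos, dif_neg, not_false_iff] at hf
          · simp only [Sum.inl.injEq, Subtype.mk.injEq] at hf
            apply Subtype.ext
            dsimp only
            rw [← List.cons_head!_tail hne, ← List.cons_head!_tail hne', h1, h1', hf]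
          · exact absurd hf (by simp)
          · exact absurd hf (by simp)
          · simp only [Sum.inr.injEq, Subtype.mk.injEq, List.cons.injEq] at hf
            have hpos : 0 < c.head! := hc.2.1 _ (by rw [← List.cons_head!_tail hne]; simp)
            have hpos' : 0 < c'.head! := hc'.2.1 _ (by rw [← List.cons_head!_tail hne']; simp)
            apply Subtype.ext
            dsimp only
            rw [← List.cons_head!_tail hne, ← List.cons_head!_tail hne', hf.2]
            congr 1
            omega
        · rintro (⟨t, ht⟩ | ⟨c', hc'⟩)
          · refine ⟨⟨1 :: t, ?_⟩, ?_⟩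
            · refine ⟨by simp [ht.1], ?_, by simp [ht.2.2]; omega⟩
              intro x hx
              rcases List.mem_cons.mp hx with rfl | hx
              · omega
              · exact ht.2.1 x hx
            · dsimp only
              rw [dif_pos (by simp)]
              simp
          · have hne' : c' ≠ [] := by intro h; rw [h] at hc'; simp at hc'
            have hpos' : 0 < c'.head! := hc'.2.1 _ (by rw [← List.cons_head!_tail hne']; simp)
            refine ⟨⟨(c'.head! + 1) :: c'.tail, ?_⟩, ?_⟩
            · have hcons := List.cons_head!_tail hne'
              refine ⟨?_, ?_, ?_⟩
              · have := hc'.1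
                rw [← hcons] at this
                simpa using this
              · intro x hx
                rcases List.mem_cons.mp hx with rfl | hx
                · omega
                · exact hc'.2.1 x (by rw [← hcons]; exact List.mem_cons_of_mem _ hx)
              · have := hc'.2.2
                rw [← hcons] at this
                simp only [List.sum_cons] at this ⊢
                omega
            · dsimp only
              rw [dif_neg (show ¬((c'.head! + 1 : ℕ) :: c'.tail).head! = 1 by
                simp [List.head!_cons]; omega)]
              simp only [Sum.inr.injEq]
              apply Subtype.ext
              dsimp only
              rw [List.head!_cons, List.tail_cons]
              have he : c'.head! + 1 - 1 = c'.head! := by omega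
              rw [he, List.cons_head!_tail hne']
      rw [hcard, ihN (m + 1), ihN m, Nat.choose_succ_succ]

lemma zip_map_fst_snd' (r : List (ℕ × ℕ)) :
    (r.map Prod.fst).zip (r.map Prod.snd) = r := by
  induction r with
  | nil => rfl
  | cons p t ih => simp [ih]

def fiber_equiv (n m : ℕ) :
    {l : List ℕ // (l.length = n ∧ IsAscentSeq l) ∧ (runs l).length = m} ≃
    ({l : List ℕ // l.length = m ∧ IsAscentSeq l ∧ l.Chain' (· ≠ ·)} ×
     {c : List ℕ // c.length = m ∧ (∀ x ∈ c, 0 < x) ∧ c.sum = n}) where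
  toFun l :=
    (⟨(runs l.1).map Prod.fst,
      by simp [l.2.2],
      (asc_iff_prim l.1).mp l.2.1.2,
      by exact (List.isChain_map _).mpr (runs_chain' l.1)⟩,
     ⟨(runs l.1).map Prod.snd,
      by simp [l.2.2],
      by
        intro x hx
        obtain ⟨p, hp, rfl⟩ := List.mem_map.mp hx
        exact runs_pos l.1 p hp,
      by rw [sum_runs_snd, l.2.1.1]⟩)
  invFun pc := ⟨unruns (pc.1.1.zip pc.2.1), by
    obtain ⟨⟨p, hp1, hp2, hp3⟩, ⟨c, hc1, hc2, hc3⟩⟩ := pc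
    dsimp only
    have hlen : p.length = c.length := by rw [hp1, hc1]
    have hzr : runs (unruns (p.zip c)) = p.zip c := by
      apply runs_unruns
      · have : p = (p.zip c).map Prod.fst := (List.map_fst_zip (le_of_eq hlen)).symm
        rw [this] at hp3
        exact (List.isChain_map _).mp hp3
      · intro q hq
        exact hc2 q.2 (List.of_mem_zip hq).2
    have hfst : (runs (unruns (p.zip c))).map Prod.fst = p := by
      rw [hzr]; exact List.map_fst_zip (le_of_eq hlen)
    refine ⟨⟨?_, ?_⟩, ?_⟩
    · rw [← sum_runs_snd (unruns (p.zip c)), hzr, List.map_snd_zip (ge_of_eq hlen), hc3]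
    · rw [asc_iff_prim, hfst]; exact hp2
    · rw [hzr, List.length_zip, hlen, hc1, Nat.min_self]⟩
  left_inv l := by
    apply Subtype.ext
    dsimp only
    rw [zip_map_fst_snd', unruns_runs]
  right_inv pc := by
    obtain ⟨⟨p, hp1, hp2, hp3⟩, ⟨c, hc1, hc2, hc3⟩⟩ := pc
    dsimp only
    have hlen : p.length = c.length := by rw [hp1, hc1]
    have hzr : runs (unruns (p.zip c)) = p.zip c := by
      apply runs_unruns
      · have : p = (p.zip c).map Prod.fst := (List.map_fst_zip (le_of_eq hlen)).symm
        rw [this] at hp3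
        exact (List.isChain_map _).mp hp3
      · intro q hq
        exact hc2 q.2 (List.of_mem_zip hq).2
    refine Prod.ext ?_ ?_ <;> apply Subtype.ext <;> dsimp only <;> rw [hzr]
    · exact List.map_fst_zip (le_of_eq hlen)
    · exact List.map_snd_zip (ge_of_eq hlen)

lemma nat_card_sigma {ι : Type*} [Fintype ι] (β : ι → Type*) [∀ i, Finite (β i)] :
    Nat.card (Σ i, β i) = ∑ i, Nat.card (β i) := by
  classical
  haveI : ∀ i, Fintype (β i) := fun i => Fintype.ofFinite (β i)
  simp [Nat.card_eq_fintype_card]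

instance finite_asc (n : ℕ) : Finite {l : List ℕ // l.length = n ∧ IsAscentSeq l} :=
  finite_subtype_list n n fun l hl => ⟨hl.1, fun x hx => hl.1 ▸ asc_entry_le hl.2 x hx⟩

instance finite_prim (m : ℕ) :
    Finite {l : List ℕ // l.length = m ∧ IsAscentSeq l ∧ l.Chain' (· ≠ ·)} :=
  finite_subtype_list m m fun l hl => ⟨hl.1, fun x hx => hl.1 ▸ asc_entry_le hl.2.1 x hx⟩

/-- the number of ascent sequences of length `n` equals
`Σ_{m=1}^n k_m · C(n-1, m-1)` where `k_m` counts primitive ascent sequences of length `m`. -/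
theorem stmt_7 (n : ℕ) (hn : 1 ≤ n) :
    Nat.card {l : List ℕ // l.length = n ∧ IsAscentSeq l} =
      ∑ m ∈ Finset.Icc 1 n,
        Nat.card {l : List ℕ // l.length = m ∧ IsAscentSeq l ∧ l.Chain' (· ≠ ·)} *
          Nat.choose (n - 1) (m - 1) := by
  classical
  set A := {l : List ℕ // l.length = n ∧ IsAscentSeq l} with hA
  have hf : ∀ a : A, (runs a.1).length ∈ Finset.Icc 1 n := by
    intro a
    rw [Finset.mem_Icc]
    constructor
    · have h1 : a.1 ≠ [] := by
        intro h
        have := a.2.1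
        rw [h] at this
        simp at this
        omega
      have h2 : runs a.1 ≠ [] := fun h => h1 (runs_eq_nil_iff.mp h)
      have := List.length_pos_iff.mpr h2
      omega
    · have h1 : ((runs a.1).map Prod.snd).sum = n := by rw [sum_runs_snd, a.2.1]
      have h2 := List.length_le_sum_of_one_le ((runs a.1).map Prod.snd) (by
        intro x hx
        obtain ⟨p, hp, rfl⟩ := List.mem_map.mp hx
        exact runs_pos a.1 p hp)
      calc (runs a.1).length = ((runs a.1).map Prod.snd).length := by simp
      _ ≤ n := by omega
  set f : A → ↥(Finset.Icc 1 n) := fun a => ⟨(runs a.1).length, hf a⟩ with hfdef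
  rw [Nat.card_congr (Equiv.sigmaFiberEquiv f).symm, nat_card_sigma]
  rw [← Finset.sum_coe_sort (Finset.Icc 1 n)
    (fun m => Nat.card {l : List ℕ // l.length = m ∧ IsAscentSeq l ∧ l.Chain' (· ≠ ·)} *
      Nat.choose (n - 1) (m - 1))]
  apply Finset.sum_congr rfl
  intro i _
  have e1 : {a : A // f a = i} ≃
      {l : List ℕ // (l.length = n ∧ IsAscentSeq l) ∧ (runs l).length = (i : ℕ)} := by
    refine Equiv.trans (Equiv.subtypeEquivRight ?_) (Equiv.subtypeSubtypeEquivSubtypeInter _ _)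
    intro a
    rw [Subtype.ext_iff]
  rw [Nat.card_congr (e1.trans (fiber_equiv n i)), Nat.card_prod]
  congr 1
  have hi := i.2
  rw [Finset.mem_Icc] at hi
  obtain ⟨m', hm'⟩ : ∃ m', (i : ℕ) = m' + 1 := ⟨(i : ℕ) - 1, by omega⟩
  obtain ⟨n', hn'⟩ : ∃ n', n = n' + 1 := ⟨n - 1, by omega⟩
  rw [hm', hn']
  simpa using comp_card n' m'
end

section
/- Let R = ℚ[u,v,y] and let G ∈ R⟦t⟧ be the formal power series whose coefficient of t^n is Σ_{s} u^{asc(s)} v^{last(s)} y^{adjpairs(s)}, the sum over all ascent sequences s of length n (so the coefficient of t^0 is 1). Let H = G − 1. Let σ₁ : R → R be the ℚ-algebra homomorphism fixing u and y and sending v ↦ 1, and let σ₂ : R → R be the ℚ-algebra homomorphism sending u ↦ uv, v ↦ 1 and fixing y; extend both coefficientwise to R⟦t⟧. Then H · ((v − 1) − t(1 + yv − y − uv)) = t(v − 1) − t·σ₁(H) + t·u·v²·σ₂(H). -/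
/-- The number of ascent sequences of length `n` with `a` ascents, last letter `ℓ`
(the empty sequence having last letter `0`) and `b` equal pairs. -/
noncomputable def ascentCount3 (n a ℓ b : ℕ) : ℕ :=
  Nat.card {l : List ℕ // l.length = n ∧ IsAscentSeq l ∧
    ascList l = a ∧ l.getLastD 0 = ℓ ∧ adjpairs l = b}

/-- `G ∈ R⟦t⟧`, `R = ℚ[u,v,y]`: the coefficient of `t^n` is
`Σ_s u^{asc(s)} v^{last(s)} y^{adjpairs(s)}` over ascent sequences `s` of length `n`. -/
noncomputable def Gser : PowerSeries (MvPolynomial (Fin 3) ℚ) :=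
  PowerSeries.mk fun n =>
    ∑ a ∈ Finset.range (n + 1), ∑ l ∈ Finset.range (n + 1), ∑ b ∈ Finset.range (n + 1),
      (ascentCount3 n a l b : MvPolynomial (Fin 3) ℚ) *
        (MvPolynomial.X 0 ^ a * MvPolynomial.X 1 ^ l * MvPolynomial.X 2 ^ b)

namespace Stmt8Aux

open Finset

noncomputable def U : MvPolynomial (Fin 3) ℚ := MvPolynomial.X 0
noncomputable def V : MvPolynomial (Fin 3) ℚ := MvPolynomial.X 1
noncomputable def Yv : MvPolynomial (Fin 3) ℚ := MvPolynomial.X 2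

/-- The monomial attached to a list. -/
noncomputable def mono (s : List ℕ) : MvPolynomial (Fin 3) ℚ :=
  U ^ ascList s * V ^ s.getLastD 0 * Yv ^ adjpairs s

/-- The finset of ascent sequences of length `n`. -/
def ascFinset : ℕ → Finset (List ℕ)
  | 0 => {([] : List ℕ)}
  | 1 => {[0]}
  | (n+2) => (ascFinset (n+1)).biUnion fun s =>
      (Finset.range (ascList s + 2)).image fun x => s ++ [x]

lemma getLastD_eq_getD (s : List ℕ) (h : s ≠ []) :
    s.getLastD 0 = s.getD (s.length - 1) 0 := by
  have hl : 0 < s.length := List.length_pos_iff.mpr h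
  rw [List.getLastD_eq_getLast?, List.getLast?_eq_getLast h, List.getLast_eq_getElem,
    List.getD_eq_getElem _ _ (by omega)]
  rfl

lemma ascList_append (s : List ℕ) (x : ℕ) (h : s ≠ []) :
    ascList (s ++ [x]) = ascList s + (if s.getLastD 0 < x then 1 else 0) := by
  have hl : 0 < s.length := List.length_pos_iff.mpr h
  unfold ascList
  have hlen : (s ++ [x]).length - 1 = s.length := by simp
  rw [hlen]
  have hr : List.range s.length = List.range (s.length - 1) ++ [s.length - 1] := by
    conv_lhs => rw [show s.length = (s.length - 1) + 1 by omega]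
    exact List.range_succ
  rw [hr, List.countP_append]
  congr 1
  · apply List.countP_congr
    intro j hj
    rw [List.mem_range] at hj
    rw [List.getD_append _ _ _ _ (by omega), List.getD_append _ _ _ _ (by omega)]
  · have h1 : (s ++ [x]).getD (s.length - 1) 0 = s.getD (s.length - 1) 0 :=
      List.getD_append _ _ _ _ (by omega)
    have h2 : (s ++ [x]).getD (s.length - 1 + 1) 0 = x := by
      rw [show s.length - 1 + 1 = s.length by omega,
        List.getD_append_right _ _ _ _ (le_refl _)]
      simp
    simp only [List.countP_cons, List.countP_nil, h1, h2, getLastD_eq_getD s h]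
    by_cases hx : s.getD (s.length - 1) 0 < x <;> simp [hx]

lemma adjpairs_append (s : List ℕ) (x : ℕ) (h : s ≠ []) :
    adjpairs (s ++ [x]) = adjpairs s + (if s.getLastD 0 = x then 1 else 0) := by
  have hl : 0 < s.length := List.length_pos_iff.mpr h
  unfold adjpairs
  have hlen : (s ++ [x]).length - 1 = s.length := by simp
  rw [hlen]
  have hr : List.range s.length = List.range (s.length - 1) ++ [s.length - 1] := by
    conv_lhs => rw [show s.length = (s.length - 1) + 1 by omega]
    exact List.range_succ
  rw [hr, List.countP_append]
  congr 1
  · apply List.countP_congr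
    intro j hj
    rw [List.mem_range] at hj
    rw [List.getD_append _ _ _ _ (by omega), List.getD_append _ _ _ _ (by omega)]
  · have h1 : (s ++ [x]).getD (s.length - 1) 0 = s.getD (s.length - 1) 0 :=
      List.getD_append _ _ _ _ (by omega)
    have h2 : (s ++ [x]).getD (s.length - 1 + 1) 0 = x := by
      rw [show s.length - 1 + 1 = s.length by omega,
        List.getD_append_right _ _ _ _ (le_refl _)]
      simp
    simp only [List.countP_cons, List.countP_nil, h1, h2, getLastD_eq_getD s h]
    by_cases hx : s.getD (s.length - 1) 0 = x <;> simp [hx]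

lemma getD_take (s : List ℕ) (i j : ℕ) (h : j < min i s.length) :
    (s.take i).getD j 0 = s.getD j 0 := by
  rw [List.getD_eq_getElem _ _ (by simp; omega), List.getD_eq_getElem _ _ (by omega : j < s.length)]
  exact List.getElem_take ..

lemma ascList_take_le (s : List ℕ) (i : ℕ) : ascList (s.take i) ≤ ascList s := by
  unfold ascList
  have hlen : (s.take i).length = min i s.length := List.length_take
  calc (List.range ((s.take i).length - 1)).countP
        (fun j => decide ((s.take i).getD j 0 < (s.take i).getD (j + 1) 0))
      = (List.range ((s.take i).length - 1)).countP
        (fun j => decide (s.getD j 0 < s.getD (j + 1) 0)) := by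
        apply List.countP_congr
        intro j hj
        rw [List.mem_range, hlen] at hj
        rw [getD_take s i j (by omega), getD_take s i (j+1) (by omega)]
    _ ≤ (List.range (s.length - 1)).countP
        (fun j => decide (s.getD j 0 < s.getD (j + 1) 0)) := by
        apply List.Sublist.countP_le
        rw [List.range_sublist]
        omega

lemma ascList_le (s : List ℕ) : ascList s ≤ s.length - 1 := by
  unfold ascList
  calc _ ≤ (List.range (s.length - 1)).length := List.countP_le_length
    _ = s.length - 1 := List.length_range

lemma adjpairs_le (s : List ℕ) : adjpairs s ≤ s.length - 1 := by
  unfold adjpairs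
  calc _ ≤ (List.range (s.length - 1)).length := List.countP_le_length
    _ = s.length - 1 := List.length_range

lemma last_le (s : List ℕ) (h : IsAscentSeq s) (hs : s ≠ []) :
    s.getLastD 0 ≤ 1 + ascList s := by
  have hl : 0 < s.length := List.length_pos_iff.mpr hs
  rw [getLastD_eq_getD s hs]
  rcases Nat.eq_or_lt_of_le hl with h1 | h1
  · -- length = 1
    have : s.length - 1 = 0 := by omega
    rw [this, h.1]
    omega
  · have := h.2 (s.length - 1) (by omega) (by omega)
    have h2 := ascList_take_le s (s.length - 1)
    omega

lemma isAscentSeq_append (s : List ℕ) (x : ℕ) (h : s ≠ []) :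
    IsAscentSeq (s ++ [x]) ↔ IsAscentSeq s ∧ x ≤ 1 + ascList s := by
  have hl : 0 < s.length := List.length_pos_iff.mpr h
  constructor
  · rintro ⟨h0, hcond⟩
    have h0' : s.getD 0 0 = 0 := by
      have heq := List.getD_append s [x] 0 0 hl
      rw [heq] at h0; exact h0
    refine ⟨⟨h0', fun i hi hilen => ?_⟩, ?_⟩
    · have := hcond i hi (by simp; omega)
      rwa [List.getD_append _ _ _ _ (by omega),
        List.take_append_of_le_length (by omega)] at this
    · have := hcond s.length hl (by simp)
      rw [List.getD_append_right _ _ _ _ (le_refl _), Nat.sub_self,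
        List.take_append_of_le_length (le_refl _), List.take_length] at this
      simpa using this
  · rintro ⟨⟨h0, hcond⟩, hx⟩
    refine ⟨?_, fun i hi hilen => ?_⟩
    · rw [List.getD_append _ _ _ _ hl, h0]
    · simp only [List.length_append, List.length_singleton] at hilen
      rcases Nat.lt_or_ge i s.length with h1 | h1
      · rw [List.getD_append _ _ _ _ h1, List.take_append_of_le_length (by omega)]
        exact hcond i hi h1
      · have h2 : i = s.length := by omega
        subst h2
        rw [List.getD_append_right _ _ _ _ (le_refl _), Nat.sub_self,
          List.take_append_of_le_length (le_refl _), List.take_length]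
        simpa using hx

lemma mem_ascFinset (n : ℕ) (l : List ℕ) :
    l ∈ ascFinset n ↔ l.length = n ∧ IsAscentSeq l := by
  induction n generalizing l with
  | zero =>
    simp only [ascFinset, Finset.mem_singleton]
    constructor
    · rintro rfl
      exact ⟨rfl, by constructor <;> simp [IsAscentSeq]⟩
    · rintro ⟨hl, -⟩
      exact List.length_eq_zero_iff.mp hl
  | succ n ih =>
    match n with
    | 0 =>
      simp only [ascFinset, Finset.mem_singleton]
      constructor
      · rintro rfl
        refine ⟨rfl, rfl, fun i hi hilen => ?_⟩
        simp at hilen; omega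
      · rintro ⟨hl, h0, -⟩
        match l, hl with
        | [a], _ =>
          simp only [List.getD] at h0
          simp_all
    | (m+1) =>
      simp only [ascFinset, Finset.mem_biUnion, Finset.mem_image, Finset.mem_range]
      constructor
      · rintro ⟨s, hs, x, hx, rfl⟩
        obtain ⟨hslen, hsasc⟩ := (ih s).mp hs
        have hsne : s ≠ [] := by intro h; subst h; simp at hslen
        refine ⟨by simp [hslen], (isAscentSeq_append s x hsne).mpr ⟨hsasc, by omega⟩⟩
      · rintro ⟨hl, hasc⟩
        have hne : l ≠ [] := by intro h; subst h; simp at hl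
        have hdec := List.dropLast_append_getLast hne
        set s := l.dropLast with hsdef
        set x := l.getLast hne with hxdef
        have hslen : s.length = m + 1 := by
          rw [hsdef, List.length_dropLast, hl]
          omega
        have hsne : s ≠ [] := by intro h; rw [h] at hslen; simp at hslen
        rw [← hdec] at hasc
        obtain ⟨hsasc, hxle⟩ := (isAscentSeq_append s x hsne).mp hasc
        exact ⟨s, (ih s).mpr ⟨hslen, hsasc⟩, x, by omega, hdec⟩

/-- The coefficient polynomial. -/
noncomputable def hpoly (n : ℕ) : MvPolynomial (Fin 3) ℚ :=
  ∑ l ∈ ascFinset n, mono l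

lemma hpoly_zero : hpoly 0 = 1 := by
  simp [hpoly, ascFinset, mono, ascList, adjpairs]

lemma hpoly_one : hpoly 1 = 1 := by
  simp [hpoly, ascFinset, mono, ascList, adjpairs]

end Stmt8Aux

namespace Stmt8Aux

lemma stats_le (n : ℕ) (l : List ℕ) (hl : l ∈ ascFinset n) :
    ascList l ≤ n ∧ l.getLastD 0 ≤ n ∧ adjpairs l ≤ n := by
  obtain ⟨hlen, hasc⟩ := (mem_ascFinset n l).mp hl
  have h1 := ascList_le l
  have h2 := adjpairs_le l
  rw [hlen] at h1 h2
  rcases eq_or_ne l [] with rfl | hne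
  · simp only [List.length_nil] at hlen
    subst hlen
    exact ⟨by omega, le_refl _, by omega⟩
  · have h3 := last_le l hasc hne
    have h4 : 0 < l.length := List.length_pos_iff.mpr hne
    rw [hlen] at h4
    omega

lemma ascentCount3_eq (n a ℓ b : ℕ) :
    ascentCount3 n a ℓ b =
      ((ascFinset n).filter
        (fun l => (ascList l, l.getLastD 0, adjpairs l) = (a, ℓ, b))).card := by
  rw [← Nat.card_eq_finsetCard]
  apply Nat.card_congr
  apply Equiv.subtypeEquivRight
  intro l
  simp only [Finset.mem_filter, mem_ascFinset, Prod.mk.injEq]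
  tauto

lemma coeff_Gser (n : ℕ) :
    (PowerSeries.coeff n) Gser = hpoly n := by
  rw [Gser, PowerSeries.coeff_mk, hpoly]
  calc
    ∑ a ∈ Finset.range (n + 1), ∑ ℓ ∈ Finset.range (n + 1), ∑ b ∈ Finset.range (n + 1),
        (ascentCount3 n a ℓ b : MvPolynomial (Fin 3) ℚ) *
          (MvPolynomial.X 0 ^ a * MvPolynomial.X 1 ^ ℓ * MvPolynomial.X 2 ^ b)
      = ∑ p ∈ Finset.range (n+1) ×ˢ (Finset.range (n+1) ×ˢ Finset.range (n+1)),
          ∑ l ∈ (ascFinset n).filter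
            (fun l => (ascList l, l.getLastD 0, adjpairs l) = p), mono l := by
        rw [Finset.sum_product]
        refine Finset.sum_congr rfl fun a _ => ?_
        rw [Finset.sum_product]
        refine Finset.sum_congr rfl fun ℓ _ => ?_
        refine Finset.sum_congr rfl fun b _ => ?_
        have hmono : ∀ l ∈ (ascFinset n).filter
            (fun l => (ascList l, l.getLastD 0, adjpairs l) = (a, ℓ, b)),
            mono l = MvPolynomial.X 0 ^ a * MvPolynomial.X 1 ^ ℓ * MvPolynomial.X 2 ^ b := by
          intro l hl
          simp only [Finset.mem_filter, Prod.mk.injEq] at hl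
          obtain ⟨-, h1, h2, h3⟩ := hl
          rw [mono, h1, h2, h3]; rfl
        rw [Finset.sum_congr rfl hmono, Finset.sum_const, nsmul_eq_mul, ascentCount3_eq]
    _ = ∑ l ∈ ascFinset n, mono l := by
        apply Finset.sum_fiberwise_of_maps_to
        intro l hl
        obtain ⟨h1, h2, h3⟩ := stats_le n l hl
        simp only [Finset.mem_product, Finset.mem_range]
        omega

lemma hpoly_succ (n : ℕ) :
    hpoly (n+2) = ∑ s ∈ ascFinset (n+1), ∑ x ∈ Finset.range (ascList s + 2),
      mono (s ++ [x]) := by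
  rw [hpoly, show ascFinset (n+2) = (ascFinset (n+1)).biUnion fun s =>
      (Finset.range (ascList s + 2)).image fun x => s ++ [x] from rfl]
  rw [Finset.sum_biUnion]
  · refine Finset.sum_congr rfl fun s _ => ?_
    refine Finset.sum_image fun x _ y _ hxy => ?_
    have := List.append_cancel_left hxy
    simpa using this
  · intro s _ s' _ hne
    rw [Function.onFun, Finset.disjoint_left]
    intro t ht ht'
    simp only [Finset.mem_image, Finset.mem_range] at ht ht'
    obtain ⟨x, -, rfl⟩ := ht
    obtain ⟨y, -, heq⟩ := ht'
    apply hne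
    have := congrArg List.dropLast heq
    simpa [List.dropLast_concat] using this.symm

noncomputable def σ1 : MvPolynomial (Fin 3) ℚ →ₐ[ℚ] MvPolynomial (Fin 3) ℚ :=
  MvPolynomial.aeval ![MvPolynomial.X 0, 1, MvPolynomial.X 2]

noncomputable def σ2 : MvPolynomial (Fin 3) ℚ →ₐ[ℚ] MvPolynomial (Fin 3) ℚ :=
  MvPolynomial.aeval ![MvPolynomial.X 0 * MvPolynomial.X 1, 1, MvPolynomial.X 2]

lemma σ1_mono (s : List ℕ) : σ1 (mono s) = U ^ ascList s * Yv ^ adjpairs s := by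
  simp [mono, U, V, Yv, σ1]

lemma σ2_mono (s : List ℕ) : σ2 (mono s) = (U * V) ^ ascList s * Yv ^ adjpairs s := by
  simp [mono, U, V, Yv, σ2]

lemma key_sum (s : List ℕ) (hne : s ≠ []) (hasc : IsAscentSeq s) :
    (V - 1) * ∑ x ∈ Finset.range (ascList s + 2), mono (s ++ [x]) =
      (1 + Yv * V - Yv - U * V) * mono s
        - U ^ ascList s * Yv ^ adjpairs s
        + U * V ^ 2 * ((U * V) ^ ascList s * Yv ^ adjpairs s) := by
  set a := ascList s with ha
  set b := adjpairs s with hb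
  set ℓ := s.getLastD 0 with hℓ
  have hla : ℓ ≤ a + 1 := by have := last_le s hasc hne; omega
  have hmono : ∀ x, mono (s ++ [x]) =
      U ^ (a + if ℓ < x then 1 else 0) * V ^ x * Yv ^ (b + if ℓ = x then 1 else 0) := by
    intro x
    rw [mono, ascList_append s x hne, adjpairs_append s x hne, List.getLastD_concat]
  have hsplit : ∑ x ∈ Finset.range (a + 2), mono (s ++ [x]) =
      (∑ x ∈ Finset.range ℓ, mono (s ++ [x])) + mono (s ++ [ℓ])
        + ∑ x ∈ Finset.Ico (ℓ+1) (a+2), mono (s ++ [x]) := by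
    rw [Finset.range_eq_Ico,
      ← Finset.sum_Ico_consecutive _ (Nat.zero_le (ℓ+1)) (by omega : ℓ+1 ≤ a+2),
      ← Finset.range_eq_Ico, Finset.sum_range_succ]
  have hA : ∑ x ∈ Finset.range ℓ, mono (s ++ [x]) =
      U ^ a * Yv ^ b * ∑ x ∈ Finset.range ℓ, V ^ x := by
    rw [Finset.mul_sum]
    refine Finset.sum_congr rfl fun x hx => ?_
    rw [Finset.mem_range] at hx
    rw [hmono x, if_neg (by omega), if_neg (by omega)]
    ring
  have hB : mono (s ++ [ℓ]) = U ^ a * V ^ ℓ * Yv ^ (b + 1) := by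
    rw [hmono ℓ, if_neg (by omega), if_pos rfl, add_zero]
  have hC : ∑ x ∈ Finset.Ico (ℓ+1) (a+2), mono (s ++ [x]) =
      U ^ (a+1) * Yv ^ b * ∑ x ∈ Finset.Ico (ℓ+1) (a+2), V ^ x := by
    rw [Finset.mul_sum]
    refine Finset.sum_congr rfl fun x hx => ?_
    rw [Finset.mem_Ico] at hx
    rw [hmono x, if_pos (by omega), if_neg (by omega)]
    ring
  have g1 : (∑ x ∈ Finset.range ℓ, V ^ x) * (V - 1) = V ^ ℓ - 1 := geom_sum_mul V ℓ
  have g2 : (∑ x ∈ Finset.Ico (ℓ+1) (a+2), V ^ x) * (V - 1) = V ^ (a+2) - V ^ (ℓ+1) := by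
    rw [Finset.sum_Ico_eq_sub _ (by omega : ℓ+1 ≤ a+2), sub_mul, geom_sum_mul, geom_sum_mul]
    ring
  rw [hsplit, hA, hB, hC, mono]
  rw [← ha, ← hb, ← hℓ]
  linear_combination (U^a * Yv^b) * g1 + (U^(a+1) * Yv^b) * g2

lemma main_rec (n : ℕ) :
    hpoly (n+2) * (V - 1) =
      (1 + Yv * V - Yv - U * V) * hpoly (n+1) - σ1 (hpoly (n+1))
        + U * V ^ 2 * σ2 (hpoly (n+1)) := by
  rw [mul_comm, hpoly_succ, Finset.mul_sum]
  rw [hpoly, Finset.mul_sum, map_sum, map_sum, Finset.mul_sum,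
    ← Finset.sum_sub_distrib, ← Finset.sum_add_distrib]
  refine Finset.sum_congr rfl fun s hs => ?_
  obtain ⟨hlen, hasc⟩ := (mem_ascFinset _ s).mp hs
  have hne : s ≠ [] := by intro h; rw [h] at hlen; simp at hlen
  rw [key_sum s hne hasc, σ1_mono, σ2_mono]

end Stmt8Aux


lemma coeff_zero_X_mul' (f : PowerSeries (MvPolynomial (Fin 3) ℚ)) :
    (PowerSeries.coeff 0) (PowerSeries.X * f) = 0 := by
  simp


/-- the recurrence
`H·((v−1) − t(1 + yv − y − uv)) = t(v−1) − t·σ₁(H) + t·u·v²·σ₂(H)` where `H = G − 1`,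
`σ₁ : v ↦ 1` and `σ₂ : u ↦ uv, v ↦ 1` (extended coefficientwise to `R⟦t⟧`). -/
theorem stmt_8 :
    (Gser - 1) *
        (@PowerSeries.C (MvPolynomial (Fin 3) ℚ) _ (MvPolynomial.X 1 - 1) -
          PowerSeries.X * @PowerSeries.C (MvPolynomial (Fin 3) ℚ) _
            (1 + MvPolynomial.X 2 * MvPolynomial.X 1 - MvPolynomial.X 2 -
              MvPolynomial.X 0 * MvPolynomial.X 1)) =
      PowerSeries.X * @PowerSeries.C (MvPolynomial (Fin 3) ℚ) _ (MvPolynomial.X 1 - 1) -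
        PowerSeries.X * (PowerSeries.map
          (MvPolynomial.aeval ![MvPolynomial.X 0, 1, MvPolynomial.X 2] :
            MvPolynomial (Fin 3) ℚ →ₐ[ℚ] MvPolynomial (Fin 3) ℚ).toRingHom (Gser - 1)) +
        PowerSeries.X * @PowerSeries.C (MvPolynomial (Fin 3) ℚ) _
            (MvPolynomial.X 0 * MvPolynomial.X 1 ^ 2) *
          (PowerSeries.map
            (MvPolynomial.aeval ![MvPolynomial.X 0 * MvPolynomial.X 1, 1, MvPolynomial.X 2] :
              MvPolynomial (Fin 3) ℚ →ₐ[ℚ] MvPolynomial (Fin 3) ℚ).toRingHom (Gser - 1)) := by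
  have hH : ∀ m : ℕ, (PowerSeries.coeff m) (Gser - 1) =
      if m = 0 then 0 else Stmt8Aux.hpoly m := by
    intro m
    rw [map_sub, Stmt8Aux.coeff_Gser, PowerSeries.coeff_one]
    rcases m with _ | m
    · simp [Stmt8Aux.hpoly_zero]
    · simp
  rw [show (Gser - 1) *
        (@PowerSeries.C (MvPolynomial (Fin 3) ℚ) _ (MvPolynomial.X 1 - 1) -
          PowerSeries.X * @PowerSeries.C (MvPolynomial (Fin 3) ℚ) _
            (1 + MvPolynomial.X 2 * MvPolynomial.X 1 - MvPolynomial.X 2 -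
              MvPolynomial.X 0 * MvPolynomial.X 1))
      = (Gser - 1) * @PowerSeries.C (MvPolynomial (Fin 3) ℚ) _ (MvPolynomial.X 1 - 1)
        - PowerSeries.X * ((Gser - 1) * @PowerSeries.C (MvPolynomial (Fin 3) ℚ) _
            (1 + MvPolynomial.X 2 * MvPolynomial.X 1 - MvPolynomial.X 2 -
              MvPolynomial.X 0 * MvPolynomial.X 1)) from by ring]
  rw [show PowerSeries.X * @PowerSeries.C (MvPolynomial (Fin 3) ℚ) _
            (MvPolynomial.X 0 * MvPolynomial.X 1 ^ 2) *
          (PowerSeries.map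
            (MvPolynomial.aeval ![MvPolynomial.X 0 * MvPolynomial.X 1, 1, MvPolynomial.X 2] :
              MvPolynomial (Fin 3) ℚ →ₐ[ℚ] MvPolynomial (Fin 3) ℚ).toRingHom (Gser - 1))
      = PowerSeries.X * (@PowerSeries.C (MvPolynomial (Fin 3) ℚ) _
            (MvPolynomial.X 0 * MvPolynomial.X 1 ^ 2) *
          (PowerSeries.map
            (MvPolynomial.aeval ![MvPolynomial.X 0 * MvPolynomial.X 1, 1, MvPolynomial.X 2] :
              MvPolynomial (Fin 3) ℚ →ₐ[ℚ] MvPolynomial (Fin 3) ℚ).toRingHom (Gser - 1)))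
      from by ring]
  apply PowerSeries.ext
  intro n
  rcases n with _ | n
  · rw [LinearMap.map_sub, LinearMap.map_add, LinearMap.map_sub, PowerSeries.coeff_mul_C, hH 0, if_pos rfl, zero_mul,
      coeff_zero_X_mul', coeff_zero_X_mul', coeff_zero_X_mul', coeff_zero_X_mul']
    ring
  · rw [LinearMap.map_sub, LinearMap.map_add, LinearMap.map_sub, PowerSeries.coeff_mul_C,
      PowerSeries.coeff_succ_X_mul, PowerSeries.coeff_succ_X_mul,
      PowerSeries.coeff_succ_X_mul, PowerSeries.coeff_succ_X_mul,
      PowerSeries.coeff_mul_C, PowerSeries.coeff_C_mul,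
      PowerSeries.coeff_map, PowerSeries.coeff_map, PowerSeries.coeff_C]
    simp only [hH]
    rcases n with _ | m
    · simp only [if_pos rfl, map_zero, Nat.zero_add]
      norm_num [Stmt8Aux.hpoly_one]
    · simp only [if_neg (Nat.succ_ne_zero _), if_neg (Nat.succ_ne_zero _)]
      have h := Stmt8Aux.main_rec m
      simp only [Stmt8Aux.σ1, Stmt8Aux.σ2, Stmt8Aux.U, Stmt8Aux.V, Stmt8Aux.Yv] at h
      simp only [AlgHom.toRingHom_eq_coe, RingHom.coe_coe]
      linear_combination h
end
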